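/- arXiv:math/0408053 — 13 statements merged into one kernel-verified Lean document; each statement's English description precedes it below -/
import Mathlib

section
/- For every non-negative integer m, \sum_{i=0}^{m} binom(2i, i) * binom(2(m-i), m-i) = 4^m. -/
open Finset Nat

private def S (n : ℕ) : ℕ := ∑ i ∈ range (n + 1), centralBinom i * centralBinom (n - i)

private lemma sym (n : ℕ) :
    2 * ∑ i ∈ range (n + 1), i * (centralBinom i * centralBinom (n - i)) = n * S n := by
  have h : ∑ i ∈ range (n + 1), i * (centralBinom i * centralBinom (n - i)) =
      ∑ i ∈ range (n + 1), (n - i) * (centralBinom (n - i) * centralBinom i) := by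
    rw [← Finset.sum_range_reflect]
    apply Finset.sum_congr rfl
    intro i hi
    have hin : i ≤ n := by simpa [Nat.lt_succ_iff] using hi
    have e1 : n + 1 - 1 - i = n - i := by omega
    have e2 : n - (n - i) = i := by omega
    rw [e1, e2]
  rw [two_mul, h]
  nth_rewrite 2 [← h]
  rw [← Finset.sum_add_distrib, S, Finset.mul_sum]
  apply Finset.sum_congr rfl
  intro i hi
  have hin : i ≤ n := by simpa [Nat.lt_succ_iff] using hi
  rw [mul_comm (centralBinom (n - i)) (centralBinom i), ← add_mul]
  congr 1
  omega

private lemma S_succ (m : ℕ) : S (m + 1) = 4 * S m := by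
  have key : (m + 1) * S (m + 1) = (m + 1) * (4 * S m) := by
    have h1 : 2 * ∑ i ∈ range (m + 2), i * (centralBinom i * centralBinom (m + 1 - i)) =
        (m + 1) * S (m + 1) := sym (m + 1)
    -- rewrite the sum: term at i=0 vanishes; shift index
    have h2 : ∑ i ∈ range (m + 2), i * (centralBinom i * centralBinom (m + 1 - i)) =
        ∑ j ∈ range (m + 1), (2 * (2 * j + 1)) * (centralBinom j * centralBinom (m - j)) := by
      rw [Finset.sum_range_succ'] -- splits off i = 0
      simp only [Nat.zero_mul, add_zero]
      apply Finset.sum_congr rfl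
      intro j hj
      have : (j + 1) * (centralBinom (j + 1) * centralBinom (m + 1 - (j + 1))) =
          ((j + 1) * centralBinom (j + 1)) * centralBinom (m - j) := by
        rw [Nat.succ_sub_succ]; ring
      rw [this, Nat.succ_mul_centralBinom_succ]
      ring
    have h3 : ∑ j ∈ range (m + 1), (2 * (2 * j + 1)) * (centralBinom j * centralBinom (m - j)) =
        4 * (∑ j ∈ range (m + 1), j * (centralBinom j * centralBinom (m - j))) + 2 * S m := by
      rw [S, Finset.mul_sum, Finset.mul_sum, ← Finset.sum_add_distrib]
      apply Finset.sum_congr rfl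
      intro j _
      ring
    have h4 := sym m
    -- 2*(m+1)*S(m+1) = 2*(4*T' + 2*S m) *2? careful
    nlinarith [h1, h2, h3, h4]
  exact Nat.eq_of_mul_eq_mul_left (by omega) key

private lemma S_eq (m : ℕ) : S m = 4 ^ m := by
  induction m with
  | zero => simp [S, centralBinom]
  | succ n ih => rw [S_succ, ih]; ring

theorem central_binom_convolution (m : ℕ) :
    ∑ i ∈ Finset.range (m + 1), (2 * i).choose i * (2 * (m - i)).choose (m - i) = 4 ^ m := by
  have := S_eq m
  simpa [S, Nat.centralBinom] using this
end

section
/- For all non-negative integers m and j, the sum over all compositions \gamma of m having exactly j parts greater than 1 of (-1)^{k(\gamma)} equals (-1)^{m+j} * binom(\lfloor m/2 \rfloor, j). (For m = 0 the only composition is the empty one, with k = 0 and no parts greater than 1.) -/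
/-!
Weight a composition by `(-1) ^ (number of parts) * X ^ (number of parts greater than 1)` and let
`P m ∈ ℤ[X]` be the total weight of the compositions of `m`. Splitting off the first part gives
`P (n + 1) = -P n - X * (P 0 + ⋯ + P (n - 1))`, and the difference of two consecutive instances of
this recursion is `P (n + 2) = (1 - X) * P n`. Hence `P m = (-1) ^ m * (1 - X) ^ ⌊m / 2⌋`, whose
coefficient of `X ^ j` is the claimed sum.
-/

open Finset Polynomial

namespace Composition

instance uniqueZero : Unique (Composition 0) where
  default := ones 0
  uniq _ := eq_ones_iff_le_length.2 (Nat.zero_le _)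

lemma blocks_ne_nil {n : ℕ} (c : Composition (n + 1)) : c.blocks ≠ [] := by
  rw [← List.length_pos_iff, blocks_length, length_pos_iff]
  exact n.succ_pos

lemma head_add_sum_tail {n : ℕ} (c : Composition (n + 1)) :
    c.blocks.head c.blocks_ne_nil + c.blocks.tail.sum = n + 1 := by
  rw [← List.sum_cons, List.cons_head_tail, c.blocks_sum]

def cons {n : ℕ} (a : Fin (n + 1)) (c : Composition (n - a)) : Composition (n + 1) where
  blocks := (a + 1) :: c.blocks
  blocks_pos hi := by
    rcases List.mem_cons.1 hi with rfl | hi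
    exacts [Nat.succ_pos _, c.blocks_pos hi]
  blocks_sum := by
    rw [List.sum_cons, c.blocks_sum]
    omega

def consEquiv (n : ℕ) : (Σ a : Fin (n + 1), Composition (n - a)) ≃ Composition (n + 1) where
  toFun x := cons x.1 x.2
  invFun c :=
    ⟨⟨c.blocks.head c.blocks_ne_nil - 1, by have := c.head_add_sum_tail; omega⟩,
      ⟨c.blocks.tail, fun hi => c.blocks_pos (List.mem_of_mem_tail hi), by
        have := c.blocks_pos (List.head_mem c.blocks_ne_nil)
        have := c.head_add_sum_tail
        dsimp only
        omega⟩⟩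
  left_inv _ := rfl
  right_inv c := by
    ext1
    change (c.blocks.head _ - 1 + 1) :: c.blocks.tail = c.blocks
    rw [Nat.sub_add_cancel (c.blocks_pos (List.head_mem _)), List.cons_head_tail]

theorem sum_succ {M : Type*} [AddCommMonoid M] (n : ℕ) (f : List ℕ → M) :
    ∑ c : Composition (n + 1), f c.blocks =
      ∑ a ∈ range (n + 1), ∑ c : Composition (n - a), f ((a + 1) :: c.blocks) := by
  rw [← (consEquiv n).sum_comp, Fintype.sum_sigma,
    ← Fin.sum_univ_eq_sum_range (fun a => ∑ c : Composition (n - a), f ((a + 1) :: c.blocks))]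
  rfl

end Composition

namespace Polynomial

theorem coeff_one_sub_X_pow {R : Type*} [CommRing R] (r j : ℕ) :
    ((1 - X : R[X]) ^ r).coeff j = (-1) ^ j * r.choose j := by
  induction r generalizing j with
  | zero => cases j <;> simp [coeff_one]
  | succ r ih =>
    rw [pow_succ, mul_sub, mul_one, coeff_sub]
    cases j with
    | zero => simp [ih]
    | succ j =>
      rw [coeff_mul_X, ih, ih, Nat.choose_succ_succ', pow_succ]
      push_cast
      ring

end Polynomial

namespace Composition

noncomputable def signWeight (l : List ℕ) : ℤ[X] :=
  C ((-1) ^ l.length) * X ^ (l.filter (fun x => 1 < x)).length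

lemma signWeight_cons (b : ℕ) (l : List ℕ) :
    signWeight (b :: l) = -(if 1 < b then X else 1) * signWeight l := by
  unfold signWeight
  split_ifs with hb
  · simp [hb, pow_succ]
    ring
  · simp [hb, pow_succ]

noncomputable def signPoly (m : ℕ) : ℤ[X] :=
  ∑ c : Composition m, signWeight c.blocks

lemma signPoly_zero : signPoly 0 = 1 := by
  rw [signPoly, Fintype.sum_unique]
  simp [signWeight, default]

lemma signPoly_succ (n : ℕ) :
    signPoly (n + 1) = -signPoly n - X * ∑ c ∈ range n, signPoly c := by
  calc signPoly (n + 1)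
      = ∑ a ∈ range (n + 1), -(if 1 < a + 1 then X else 1) * signPoly (n - a) := by
        simp only [signPoly, sum_succ, signWeight_cons, mul_sum]
    _ = -signPoly n - X * ∑ a ∈ range n, signPoly (n - 1 - a) := by
        rw [sum_range_succ', mul_sum, sub_eq_add_neg, add_comm]
        simp [Nat.sub_sub, add_comm 1]
    _ = -signPoly n - X * ∑ c ∈ range n, signPoly c := by rw [sum_range_reflect]

lemma signPoly_add_two (n : ℕ) : signPoly (n + 2) = (1 - X) * signPoly n := by
  have h₁ := signPoly_succ n
  have h₂ := signPoly_succ (n + 1)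
  rw [sum_range_succ] at h₂
  linear_combination h₂ - h₁

theorem signPoly_eq (m : ℕ) : signPoly m = (-1) ^ m * (1 - X) ^ (m / 2) := by
  induction m using Nat.twoStepInduction with
  | zero => simp [signPoly_zero]
  | one => simp [signPoly_succ, signPoly_zero]
  | more n ih _ =>
    rw [signPoly_add_two, ih, show (n + 2) / 2 = n / 2 + 1 by omega]
    ring

theorem coeff_signPoly (m j : ℕ) :
    (signPoly m).coeff j = ∑ c : Composition m,
      if (c.blocks.filter (fun x => 1 < x)).length = j then (-1 : ℤ) ^ c.length else 0 := by
  simp only [signPoly, signWeight, finsetSum_coeff, coeff_C_mul_X_pow, eq_comm, blocks_length]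

end Composition

theorem composition_sign_sum_big_parts (m j : ℕ) :
    ∑ γ ∈ Finset.univ.filter
        (fun γ : Composition m => (γ.blocks.filter (fun x => 1 < x)).length = j),
      (-1 : ℤ) ^ γ.length
    = (-1) ^ (m + j) * ((m / 2).choose j : ℤ) := by
  rw [sum_filter, ← Composition.coeff_signPoly, Composition.signPoly_eq,
    show (-1 : ℤ[X]) ^ m = C ((-1) ^ m) by simp, coeff_C_mul,
    coeff_one_sub_X_pow, pow_add, mul_assoc]
end

section
/- Let m be a positive integer and j a non-negative integer. For a composition \gamma = (c_1, ..., c_l) of m, let u(\gamma) = #{ i : 2 \le i \le l and c_i > 1 } (the number of parts greater than 1 other than the first part). Then the sum over all compositions \gamma of m with u(\gamma) = j of (-1)^{k(\gamma)} equals 0 if m is even, and equals (-1)^{m+j} * binom(\lfloor m/2 \rfloor, j) if m is odd. -/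
/-- The finset of compositions of `m` as lists of positive integers. -/
def comps : ℕ → Finset (List ℕ)
  | 0 => {[]}
  | (m+1) => (Finset.range (m+1)).biUnion fun c =>
      (comps (m - c)).image (fun l => (c+1) :: l)
  decreasing_by exact Nat.lt_succ_of_le (Nat.sub_le m c)

lemma mem_comps : ∀ (m : ℕ) (l : List ℕ), l ∈ comps m ↔ (l.sum = m ∧ ∀ x ∈ l, 0 < x) := by
  intro m
  induction m using Nat.strong_induction_on with
  | _ m ih =>
    intro l
    match m with
    | 0 =>
      simp only [comps, Finset.mem_singleton]
      constructor
      · rintro rfl; simp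
      · rintro ⟨hs, hp⟩
        cases l with
        | nil => rfl
        | cons a t =>
          exfalso
          have := hp a (by simp)
          simp at hs
          omega
    | (m+1) =>
      rw [comps]
      simp only [Finset.mem_biUnion, Finset.mem_range, Finset.mem_image]
      constructor
      · rintro ⟨c, hc, l', hl', rfl⟩
        obtain ⟨hs, hp⟩ := (ih (m - c) (by omega) l').1 hl'
        constructor
        · simp [hs]; omega
        · intro x hx
          rcases List.mem_cons.1 hx with rfl | hx
          · omega
          · exact hp x hx
      · rintro ⟨hs, hp⟩
        cases l with
        | nil => simp at hs
        | cons a t =>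
          have ha : 0 < a := hp a (by simp)
          simp only [List.sum_cons] at hs
          refine ⟨a - 1, by omega, t, ?_, by congr 1; omega⟩
          exact (ih (m - (a-1)) (by omega) t).2 ⟨by omega, fun x hx => hp x (by simp [hx])⟩

lemma sum_comps_succ (m : ℕ) (F : List ℕ → ℤ) :
    ∑ l ∈ comps (m+1), F l
      = ∑ c ∈ Finset.range (m+1), ∑ l ∈ comps (m - c), F ((c+1) :: l) := by
  rw [comps, Finset.sum_biUnion]
  · exact Finset.sum_congr rfl fun c _ => Finset.sum_image (by intro a _ b _ h; injection h)
  · intro c _ c' _ hcc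
    refine Finset.disjoint_left.2 ?_
    rintro l hl hl'
    simp only [Finset.mem_image] at hl hl'
    obtain ⟨a, _, rfl⟩ := hl
    obtain ⟨b, _, hb⟩ := hl'
    injection hb with h1 _
    omega

/-- Signed sum over compositions of `m` counting parts `>1` (including the first). -/
def g (m j : ℕ) : ℤ :=
  ∑ l ∈ comps m, if (l.filter (fun x => 1 < x)).length = j then (-1 : ℤ) ^ l.length else 0

lemma g_zero (j : ℕ) : g 0 j = if 0 = j then 1 else 0 := by
  simp [g, comps]

lemma g_succ (m j : ℕ) :
    g (m+1) j = -g m j - (if j = 0 then 0 else ∑ n ∈ Finset.range m, g n (j-1)) := by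
  have key : g (m+1) j
      = (∑ c ∈ Finset.range m, ∑ l ∈ comps (m - (c+1)),
          if (l.filter (fun x => 1 < x)).length + 1 = j then -((-1:ℤ)^l.length) else 0)
        + ∑ l ∈ comps m,
            (if (l.filter (fun x => 1 < x)).length = j then -((-1:ℤ)^l.length) else 0) := by
    rw [g, sum_comps_succ, Finset.sum_range_succ']
    congr 1
    · apply Finset.sum_congr rfl; intro c _
      apply Finset.sum_congr rfl; intro l _
      have h1 : (((c + 1 + 1) :: l).filter (fun x => 1 < x))
          = (c+1+1) :: l.filter (fun x => 1 < x) := by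
        simp [List.filter_cons]
      rw [h1]
      simp [pow_succ]
    · apply Finset.sum_congr (by simp)
      intro l _
      have h1 : (((0 + 1) :: l).filter (fun x => 1 < x)) = l.filter (fun x => 1 < x) := by
        simp [List.filter_cons]
      rw [h1]
      simp [pow_succ]
  rw [key]
  rcases j with _ | j'
  · have hz : (∑ c ∈ Finset.range m, ∑ l ∈ comps (m - (c+1)),
        if (l.filter (fun x => 1 < x)).length + 1 = 0 then -((-1:ℤ)^l.length) else 0) = 0 :=
      Finset.sum_eq_zero fun c _ => Finset.sum_eq_zero fun l _ => by simp
    rw [hz, zero_add, if_pos rfl, sub_zero, g, ← Finset.sum_neg_distrib]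
    exact Finset.sum_congr rfl fun l _ => by split <;> simp
  · simp only [Nat.succ_ne_zero, if_false, Nat.add_sub_cancel]
    have h2 : ∀ c ∈ Finset.range m,
        (∑ l ∈ comps (m - (c+1)),
          if (l.filter (fun x => 1 < x)).length + 1 = j'+1 then -((-1:ℤ)^l.length) else 0)
        = -g (m - 1 - c) j' := by
      intro c hc
      have : m - (c+1) = m - 1 - c := by omega
      rw [this, g, ← Finset.sum_neg_distrib]
      apply Finset.sum_congr rfl
      intro l _
      simp only [Nat.add_right_cancel_iff]
      split <;> simp
    rw [Finset.sum_congr rfl h2, Finset.sum_neg_distrib,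
        Finset.sum_range_reflect (fun n => g n j') m]
    have h3 : ∀ l ∈ comps m,
        (if (l.filter (fun x => 1 < x)).length = j'+1 then -((-1:ℤ)^l.length) else 0)
        = -(if (l.filter (fun x => 1 < x)).length = j'+1 then ((-1:ℤ)^l.length) else 0) := by
      intro l _; split <;> simp
    rw [Finset.sum_congr rfl h3, Finset.sum_neg_distrib]
    have hg : g m (j'+1) = ∑ l ∈ comps m,
        if (l.filter (fun x => 1 < x)).length = j'+1 then ((-1:ℤ)^l.length) else 0 := rfl
    rw [← hg]
    ring

lemma alt_sum (m i : ℕ) :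
    ∑ n ∈ Finset.range m, ((-1 : ℤ)^n * ((n/2).choose i : ℤ))
      = if m % 2 = 0 then 0 else ((m/2).choose i : ℤ) := by
  induction m with
  | zero => simp
  | succ m ih =>
    rw [Finset.sum_range_succ, ih]
    rcases Nat.even_or_odd m with he | ho
    · have h1 : m % 2 = 0 := Nat.even_iff.1 he
      have h2 : (m+1) % 2 = 1 := by omega
      have h3 : (m+1)/2 = m/2 := by omega
      have h4 : (-1 : ℤ)^m = 1 := Even.neg_one_pow he
      simp [h1, h2, h3, h4]
    · have h1 : m % 2 = 1 := Nat.odd_iff.1 ho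
      have h2 : (m+1) % 2 = 0 := by omega
      have h4 : (-1 : ℤ)^m = -1 := Odd.neg_one_pow ho
      simp [h1, h2, h4]

lemma g_formula : ∀ m j, g m j = (-1 : ℤ)^(m+j) * ((m/2).choose j : ℤ) := by
  intro m
  induction m using Nat.strong_induction_on with
  | _ m ih =>
    match m with
    | 0 =>
      intro j
      rw [g_zero]
      rcases j with _ | j <;> simp
    | (m+1) =>
      intro j
      rw [g_succ, ih m (by omega)]
      rcases j with _ | j'
      · rw [if_pos rfl, sub_zero]
        simp only [Nat.choose_zero_right, Nat.cast_one, mul_one, Nat.add_zero, pow_succ]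
        ring
      · rw [if_neg (by omega)]
        simp only [Nat.add_sub_cancel]
        have hsum : ∑ n ∈ Finset.range m, g n j'
            = (-1:ℤ)^j' * (if m % 2 = 0 then 0 else ((m/2).choose j' : ℤ)) := by
          rw [← alt_sum m j', Finset.mul_sum]
          apply Finset.sum_congr rfl
          intro n hn
          rw [ih n (lt_of_lt_of_le (Finset.mem_range.1 hn) (Nat.le_succ m)) j', pow_add]
          ring
        rw [hsum]
        rcases Nat.even_or_odd m with he | ho
        · have e1 : m % 2 = 0 := Nat.even_iff.1 he
          have e2 : (m+1)/2 = m/2 := by omega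
          rw [if_pos e1, e2, mul_zero, sub_zero,
            show m+1+(j'+1) = (m+(j'+1)) + 1 by ring, pow_succ]
          ring
        · have e1 : m % 2 = 1 := Nat.odd_iff.1 ho
          have e2 : (m+1)/2 = m/2 + 1 := by omega
          have hm : (-1:ℤ)^m = -1 := Odd.neg_one_pow ho
          rw [if_neg (by omega), e2, Nat.choose_succ_succ, Nat.cast_add]
          simp only [pow_add, pow_succ, hm]
          ring

lemma comp_sum (m : ℕ) (F : List ℕ → ℤ) :
    ∑ γ : Composition m, F γ.blocks = ∑ l ∈ comps m, F l := by
  apply Finset.sum_bij (fun (γ : Composition m) _ => γ.blocks)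
  · intro γ _
    exact (mem_comps m γ.blocks).2 ⟨γ.blocks_sum, fun x hx => γ.blocks_pos hx⟩
  · intro a _ b _ h
    exact Composition.ext h
  · intro l hl
    obtain ⟨hs, hp⟩ := (mem_comps m l).1 hl
    exact ⟨⟨l, fun {i} hi => hp i hi, hs⟩, Finset.mem_univ _, rfl⟩
  · intro γ _; rfl

theorem composition_sign_sum_big_parts_after_first (m j : ℕ) (hm : 0 < m) :
    ∑ γ ∈ Finset.univ.filter
        (fun γ : Composition m => (γ.blocks.tail.filter (fun x => 1 < x)).length = j),
      (-1 : ℤ) ^ γ.length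
    = if m % 2 = 0 then 0 else (-1) ^ (m + j) * ((m / 2).choose j : ℤ) := by
  obtain ⟨m', rfl⟩ : ∃ m', m = m' + 1 := ⟨m - 1, by omega⟩
  rw [Finset.sum_filter]
  have step1 : ∑ γ : Composition (m'+1),
      (if ((γ.blocks.tail.filter (fun x => 1 < x)).length = j) then (-1:ℤ)^γ.length else 0)
      = ∑ l ∈ comps (m'+1),
          (if ((l.tail.filter (fun x => 1 < x)).length = j) then (-1:ℤ)^l.length else 0) := by
    rw [← comp_sum (m'+1)
      (fun l => if ((l.tail.filter (fun x => 1 < x)).length = j) then (-1:ℤ)^l.length else 0)]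
  rw [step1, sum_comps_succ]
  have h2 : ∀ c ∈ Finset.range (m'+1),
      (∑ l ∈ comps (m' - c),
        if (((((c+1) :: l)).tail.filter (fun x => 1 < x)).length = j)
          then (-1:ℤ)^((c+1) :: l).length else 0)
      = -g (m' + 1 - 1 - c) j := by
    intro c _
    have e : m' + 1 - 1 - c = m' - c := by omega
    rw [e, g, ← Finset.sum_neg_distrib]
    apply Finset.sum_congr rfl
    intro l _
    simp only [List.tail_cons, List.length_cons, pow_succ]
    split <;> ring
  rw [Finset.sum_congr rfl h2, Finset.sum_neg_distrib,
    Finset.sum_range_reflect (fun n => g n j) (m'+1)]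
  have h4 : ∑ n ∈ Finset.range (m'+1), g n j
      = (-1:ℤ)^j * (if (m'+1) % 2 = 0 then 0 else (((m'+1)/2).choose j : ℤ)) := by
    rw [← alt_sum (m'+1) j, Finset.mul_sum]
    apply Finset.sum_congr rfl
    intro n _
    rw [g_formula n j, pow_add]
    ring
  rw [h4]
  by_cases hp : (m'+1) % 2 = 0
  · simp [hp]
  · rw [if_neg hp, if_neg hp]
    have hodd : (-1:ℤ)^(m'+1) = -1 := Odd.neg_one_pow (Nat.odd_iff.2 (by omega))
    rw [pow_add, hodd]
    ring
end

section
/- For all non-negative integers i, j, m, one has 4^m * C(i, j) = \sum_{b=0}^{m} binom(m, b) * C(i+b, m+j-b). -/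
/-- The bivariate Catalan number `C(m, n) = (2m)! (2n)! / (m! (m+n)! n!)`, as a rational. -/
def bivariateCatalan (m n : ℕ) : ℚ :=
  ((2 * m).factorial * (2 * n).factorial : ℚ) /
    (m.factorial * (m + n).factorial * n.factorial)

lemma bc_recur (i j : ℕ) :
    bivariateCatalan (i+1) j + bivariateCatalan i (j+1) = 4 * bivariateCatalan i j := by
  unfold bivariateCatalan
  have h1 : 2*(i+1) = 2*i+1+1 := by ring
  have h2 : 2*(j+1) = 2*j+1+1 := by ring
  have e1 : i+1+j = i+j+1 := by ring
  have e2 : i+(j+1) = i+j+1 := by ring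
  rw [h1, h2, e1, e2]
  have f1 : (i.factorial : ℚ) ≠ 0 := by positivity
  have f2 : (j.factorial : ℚ) ≠ 0 := by positivity
  have f3 : ((i+j).factorial : ℚ) ≠ 0 := by positivity
  simp only [Nat.factorial_succ]
  push_cast
  field_simp
  ring

theorem bivariateCatalan_binomial_convolution (i j m : ℕ) :
    4 ^ m * bivariateCatalan i j =
      ∑ b ∈ Finset.range (m + 1),
        (m.choose b : ℚ) * bivariateCatalan (i + b) (m + j - b) := by
  induction m generalizing i j with
  | zero => simp
  | succ m ih =>
    set g : ℕ → ℚ := fun b => ((m.choose b : ℕ) : ℚ) * bivariateCatalan (i + b) (m + 1 + j - b)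
      with hg
    have hsucc : ∑ b ∈ Finset.range (m + 2),
        ((m+1).choose b : ℚ) * bivariateCatalan (i + b) (m + 1 + j - b)
        = (∑ b ∈ Finset.range (m + 1),
              (((m.choose b : ℚ) + (m.choose (b+1) : ℚ)) * bivariateCatalan (i + b + 1) (m + j - b)))
          + bivariateCatalan i (m + 1 + j) := by
      rw [Finset.sum_range_succ']
      congr 1
      · apply Finset.sum_congr rfl
        intro b hb
        simp only [Finset.mem_range] at hb
        have : m + 1 + j - (b + 1) = m + j - b := by omega
        rw [this]
        have hc : (((m+1).choose (b+1) : ℕ) : ℚ) = (m.choose b : ℚ) + (m.choose (b+1) : ℚ) := by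
          rw [Nat.choose_succ_succ]; push_cast; ring
        rw [hc, show i + (b + 1) = i + b + 1 from rfl]
      · simp
    rw [hsucc]
    have hsplit : ∑ b ∈ Finset.range (m + 1),
        (((m.choose b : ℚ) + (m.choose (b+1) : ℚ)) * bivariateCatalan (i + b + 1) (m + j - b))
        = (∑ b ∈ Finset.range (m + 1), (m.choose b : ℚ) * bivariateCatalan (i + 1 + b) (m + j - b))
          + ∑ b ∈ Finset.range (m + 1), g (b + 1) := by
      rw [← Finset.sum_add_distrib]
      apply Finset.sum_congr rfl
      intro b hb
      simp only [Finset.mem_range] at hb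
      have e1 : i + b + 1 = i + 1 + b := by ring
      have e2 : m + 1 + j - (b + 1) = m + j - b := by omega
      simp only [hg, e1, e2]
      ring
    rw [hsplit]
    have htail : ∑ b ∈ Finset.range (m + 1), g (b + 1)
        = (∑ b ∈ Finset.range (m + 1), g b) - g 0 := by
      have h2 : ∑ b ∈ Finset.range (m + 1 + 1), g b
          = (∑ b ∈ Finset.range (m + 1), g (b + 1)) + g 0 :=
        Finset.sum_range_succ' g (m + 1)
      have h3 : ∑ b ∈ Finset.range (m + 2), g b
          = (∑ b ∈ Finset.range (m + 1), g b) + g (m + 1) := Finset.sum_range_succ g (m + 1)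
      have h4 : g (m + 1) = 0 := by simp [hg, Nat.choose_succ_self]
      rw [h4] at h3
      linarith [h2, h3]
    rw [htail]
    have hg0 : g 0 = bivariateCatalan i (m + 1 + j) := by simp [hg]
    have hsum2 : ∑ b ∈ Finset.range (m + 1), g b
        = ∑ b ∈ Finset.range (m + 1), (m.choose b : ℚ) * bivariateCatalan (i + b) (m + (j+1) - b) := by
      apply Finset.sum_congr rfl
      intro b hb
      simp only [Finset.mem_range] at hb
      have : m + 1 + j - b = m + (j + 1) - b := by omega
      simp [hg, this]
    rw [hg0, hsum2, ← ih (i+1) j, ← ih i (j+1)]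
    have hrec := bc_recur i j
    have key : (4:ℚ) ^ (m+1) * bivariateCatalan i j
        = 4 ^ m * bivariateCatalan (i+1) j + 4 ^ m * bivariateCatalan i (j+1) := by
      rw [pow_succ, mul_assoc, ← hrec]; ring
    linarith [key]
end

section
/- Let n, m be non-negative integers, not both equal to 0. Then, as an identity of rational numbers: \sum_{d=0}^{\min(n,m)} (-1)^d / 4^{\lfloor (n+m-2d)/2 \rfloor} * ((n+m-2d)/(n+m-d)) * ((n+m-d)! / ((n-d)! * (m-d)! * d!)) * binom(2\lfloor (n+m-2d)/2 \rfloor, \lfloor (n+m-2d)/2 \rfloor) = (1 / 4^{\lfloor n/2 \rfloor + \lfloor m/2 \rfloor}) * binom(2\lfloor n/2 \rfloor, \lfloor n/2 \rfloor) * binom(2\lfloor m/2 \rfloor, \lfloor m/2 \rfloor). -/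
/-!
Let `F(x) = ∑ c_k x^k` with `c_k = binom(2⌊k/2⌋, ⌊k/2⌋) / 4^⌊k/2⌋`, so that
`F(x) = (1 + x) (1 - x²)^(-1/2) = √((1 + x) / (1 - x))`. Expanding `(1 + xy)^(-k)`, the left-hand
side is the coefficient of `x^n y^m` in `F(t)` with `t = (x + y) / (1 + xy)`, and the identity says
`F(t) = F(x) F(y)` (with `x = tanh u`, `F(x) = e^u`).

The recurrence `(k + 2) c_{k+2} = c_{k+1} + k c_k` is the differential equation `(1 - x²) F' = F`.
Since `(1 - x²) ∂ₓ t = 1 - t²`, the series `F(t)` satisfies the same equation in `x`, so its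
coefficients satisfy the recurrence in `n`; at `n = 0` they are `c_m`, hence they equal `c_n c_m`.
-/

open PowerSeries Finset

namespace PowerSeries

variable {R : Type*} [CommRing R]

lemma coeff_mk_one_pow (k j : ℕ) : coeff j ((mk 1 : R⟦X⟧) ^ k) = (k + j - 1).choose j := by
  rcases k with _ | k
  · rcases j with _ | j <;> simp [coeff_one]
  · rw [mk_one_pow_eq_mk_choose_add, coeff_mk, Nat.add_right_comm, Nat.add_sub_cancel,
      Nat.choose_symm_add]

lemma coeff_X_add_C_pow (y : R) (k i : ℕ) :
    coeff i ((X + C y) ^ k) = y ^ (k - i) * k.choose i := by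
  rw [← Polynomial.coe_X, ← Polynomial.coe_C, ← Polynomial.coe_add, ← Polynomial.coe_pow,
    Polynomial.coeff_coe, Polynomial.coeff_X_add_C_pow]

lemma one_add_C_mul_X_mul_rescale_mk_one (y : R) : (1 + C y * X) * rescale (-y) (mk 1) = 1 := by
  have h := congrArg (rescale (-y)) (mk_one_mul_one_sub_eq_one R)
  rw [map_mul, map_sub, map_one, rescale_X, map_neg] at h
  linear_combination h

lemma derivative_rescale_mk_one (y : R) :
    d⁄dX R (rescale (-y) (mk 1)) = -C y * rescale (-y) (mk 1) ^ 2 := by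
  have hu := one_add_C_mul_X_mul_rescale_mk_one y
  have h := congrArg (d⁄dX R) hu
  simp only [Derivation.leibniz, map_add, derivative_C, derivative_one, smul_eq_mul, derivative_X,
    mul_one, mul_zero, add_zero] at h
  linear_combination rescale (-y) (mk 1) * h - d⁄dX R (rescale (-y) (mk 1)) * hu

lemma coeff_zero_one_sub_X_sq_mul_derivative (f : R⟦X⟧) :
    coeff 0 ((1 - X ^ 2) * d⁄dX R f) = coeff 1 f := by
  rw [sub_mul, one_mul, map_sub, coeff_derivative, coeff_X_pow_mul']
  simp

lemma coeff_succ_one_sub_X_sq_mul_derivative (f : R⟦X⟧) (n : ℕ) :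
    coeff (n + 1) ((1 - X ^ 2) * d⁄dX R f) = (n + 2) • coeff (n + 2) f - n • coeff n f := by
  rcases n with _ | n <;> simp [sub_mul, coeff_X_pow_mul', coeff_derivative] <;> ring

end PowerSeries

noncomputable def halfCentralBinom (k : ℕ) : ℚ := ((k / 2).centralBinom : ℚ) / 4 ^ (k / 2)

lemma halfCentralBinom_zero : halfCentralBinom 0 = 1 := by simp [halfCentralBinom]

lemma halfCentralBinom_one : halfCentralBinom 1 = 1 := by simp [halfCentralBinom]

lemma succ_mul_centralBinom_succ_div_four_pow (j : ℕ) :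
    (2 * (j : ℚ) + 2) * ((j + 1).centralBinom / 4 ^ (j + 1))
      = (2 * j + 1) * (j.centralBinom / 4 ^ j) := by
  have h : ((j : ℚ) + 1) * (j + 1).centralBinom = 2 * (2 * j + 1) * j.centralBinom := by
    exact_mod_cast Nat.succ_mul_centralBinom_succ j
  rw [pow_succ]
  field_simp
  linear_combination 2 * h

lemma halfCentralBinom_add_two (k : ℕ) :
    ((k : ℚ) + 2) * halfCentralBinom (k + 2)
      = halfCentralBinom (k + 1) + k * halfCentralBinom k := by
  have h := succ_mul_centralBinom_succ_div_four_pow (k / 2)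
  obtain ⟨j, rfl | rfl⟩ := Nat.even_or_odd' k
  · simp only [halfCentralBinom, show (2 * j + 2) / 2 = j + 1 by omega,
      show (2 * j + 1) / 2 = j by omega, show 2 * j / 2 = j by omega] at h ⊢
    push_cast
    linear_combination h
  · simp only [halfCentralBinom, show (2 * j + 1 + 2) / 2 = j + 1 by omega,
      show (2 * j + 1 + 1) / 2 = j + 1 by omega, show (2 * j + 1) / 2 = j by omega] at h ⊢
    push_cast
    linear_combination h

-- `(1 - x²) F' = F` for `F(T) = ∑ c_k T^k`, with `a k` in place of `T^k`; the last two terms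
-- come from truncating the sum at `K`.
lemma sum_halfCentralBinom_mul_sub (a : ℕ → ℚ) (K : ℕ) :
    ∑ k ∈ range (K + 1), halfCentralBinom k * (k * (a (k - 1) - a (k + 1)))
      = ∑ k ∈ range (K + 1), halfCentralBinom k * a k
        - (K + 1) * halfCentralBinom (K + 1) * a K - K * halfCentralBinom K * a (K + 1) := by
  induction K with
  | zero => simp [halfCentralBinom_zero, halfCentralBinom_one]
  | succ K ih =>
    rw [sum_range_succ, ih, sum_range_succ _ (K + 1), Nat.add_sub_cancel]
    push_cast
    linear_combination a (K + 1) * halfCentralBinom_add_two K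

section TanhAdd

variable {R : Type*} [CommRing R]

-- `(X + y) / (1 + y X)`: `rescale (-y) (mk 1)` is the inverse of `1 + y X`.
noncomputable def tanhAdd (y : R) : R⟦X⟧ := (X + C y) * rescale (-y) (mk 1)

lemma one_sub_X_sq_mul_derivative_tanhAdd (y : R) :
    (1 - X ^ 2) * d⁄dX R (tanhAdd y) = 1 - tanhAdd y ^ 2 := by
  have hu := one_add_C_mul_X_mul_rescale_mk_one y
  simp only [tanhAdd, Derivation.leibniz, derivative_rescale_mk_one, map_add, derivative_X,
    derivative_C, smul_eq_mul]
  -- both sides are `(1 - X²) (1 - y²) / (1 + y X)²`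
  linear_combination
    (-((1 - X ^ 2) * rescale (-y) (mk 1) - 1 - (1 + C y * X) * rescale (-y) (mk 1))) * hu

lemma one_sub_X_sq_mul_derivative_tanhAdd_pow (y : R) (k : ℕ) :
    (1 - X ^ 2) * d⁄dX R (tanhAdd y ^ k) = k • (tanhAdd y ^ (k - 1) - tanhAdd y ^ (k + 1)) := by
  rw [derivative_pow, nsmul_eq_mul]
  rcases k with _ | k
  · simp
  · rw [Nat.add_sub_cancel]
    linear_combination
      ((k + 1 : ℕ) : R⟦X⟧) * tanhAdd y ^ k * one_sub_X_sq_mul_derivative_tanhAdd y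

lemma coeff_tanhAdd_pow (y : R) (k n : ℕ) :
    coeff n (tanhAdd y ^ k) = ∑ d ∈ range (n + 1),
      (-1) ^ d * ((k + d - 1).choose d * k.choose (n - d) : ℕ) * y ^ (d + (k - (n - d))) := by
  rw [tanhAdd, mul_pow, mul_comm, coeff_mul, Finset.Nat.sum_antidiagonal_eq_sum_range_succ
    (fun i j => coeff i (rescale (-y) (mk 1) ^ k) * coeff j ((X + C y) ^ k))]
  refine sum_congr rfl fun d _ => ?_
  rw [← map_pow, coeff_rescale, coeff_mk_one_pow, coeff_X_add_C_pow]
  push_cast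
  ring

end TanhAdd

-- The coefficient of `x^n y^m` in `((x + y) / (1 + x y))^k`.
noncomputable def tanhAddCoeff (k n m : ℕ) : ℚ :=
  (coeff n (tanhAdd (Polynomial.X : Polynomial ℚ) ^ k)).coeff m

lemma tanhAddCoeff_eq (k n m : ℕ) :
    tanhAddCoeff k n m = ∑ d ∈ range (n + 1),
      if d + (k - (n - d)) = m then (-1 : ℚ) ^ d * ((k + d - 1).choose d * k.choose (n - d) : ℕ)
      else 0 := by
  rw [tanhAddCoeff, coeff_tanhAdd_pow, Polynomial.finsetSum_coeff]
  refine sum_congr rfl fun d _ => ?_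
  rw [← Polynomial.C_eq_natCast, ← Polynomial.C_1, ← Polynomial.C_neg, ← Polynomial.C_pow,
    ← Polynomial.C_mul, Polynomial.coeff_C_mul_X_pow]
  simp only [eq_comm]

lemma tanhAddCoeff_eq_zero {k n m : ℕ} (h : n + m < k) : tanhAddCoeff k n m = 0 := by
  rw [tanhAddCoeff_eq]
  exact sum_eq_zero fun d hd => if_neg (by simp only [mem_range] at hd; omega)

lemma tanhAddCoeff_one_left (k m : ℕ) :
    tanhAddCoeff k 1 m = k * (tanhAddCoeff (k - 1) 0 m - tanhAddCoeff (k + 1) 0 m) := by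
  have h := congrArg (fun f => (coeff 0 f).coeff m)
    (one_sub_X_sq_mul_derivative_tanhAdd_pow (Polynomial.X : Polynomial ℚ) k)
  simp only [coeff_zero_one_sub_X_sq_mul_derivative] at h
  rw [tanhAddCoeff, h]
  simp [tanhAddCoeff]

lemma tanhAddCoeff_add_two_left (k n m : ℕ) :
    (n + 2) * tanhAddCoeff k (n + 2) m - n * tanhAddCoeff k n m
      = k * (tanhAddCoeff (k - 1) (n + 1) m - tanhAddCoeff (k + 1) (n + 1) m) := by
  have h := congrArg (fun f => (coeff (n + 1) f).coeff m)
    (one_sub_X_sq_mul_derivative_tanhAdd_pow (Polynomial.X : Polynomial ℚ) k)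
  simp only [coeff_succ_one_sub_X_sq_mul_derivative, map_sub, map_nsmul, Polynomial.coeff_sub,
    Polynomial.coeff_smul] at h
  simp only [nsmul_eq_mul] at h
  exact_mod_cast h

noncomputable def tanhAddCompCoeff (n m : ℕ) : ℚ :=
  ∑ d ∈ range (min n m + 1),
    (-1) ^ d * ((n + m - d - 1).choose d * (n + m - 2 * d).choose (n - d) : ℕ)
      * halfCentralBinom (n + m - 2 * d)

lemma sum_halfCentralBinom_mul_tanhAddCoeff {n m K : ℕ} (hK : n + m < K) :
    ∑ k ∈ range K, halfCentralBinom k * tanhAddCoeff k n m = tanhAddCompCoeff n m := by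
  simp_rw [tanhAddCoeff_eq, mul_sum]
  rw [sum_comm, tanhAddCompCoeff, ← sum_filter_add_sum_filter_not (range (n + 1)) (· ≤ m),
    sum_congr (s₂ := range (min n m + 1)) (by ext; simp only [mem_filter, mem_range]; omega),
    sum_eq_zero (s := filter _ _), add_zero]
  · intro d hd
    simp only [mem_filter, mem_range] at hd
    exact sum_eq_zero fun k _ => by rw [if_neg (by omega), mul_zero]
  · intro d hd
    simp only [mem_range] at hd
    rw [sum_eq_single_of_mem (n + m - 2 * d) (mem_range.2 (by omega)), if_pos (by omega),
      show n + m - 2 * d + d - 1 = n + m - d - 1 by omega, mul_comm]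
    intro k _ hk
    split_ifs with h
    · rw [Nat.choose_eq_zero_of_lt (by omega : k < n - d)]
      simp
    · rw [mul_zero]

lemma tanhAddCompCoeff_one_left (m : ℕ) : tanhAddCompCoeff 1 m = tanhAddCompCoeff 0 m := by
  have h := sum_halfCentralBinom_mul_sub (fun k => tanhAddCoeff k 0 m) (m + 1)
  rw [tanhAddCoeff_eq_zero (by omega), tanhAddCoeff_eq_zero (by omega),
    sum_halfCentralBinom_mul_tanhAddCoeff (by omega)] at h
  simp only [← tanhAddCoeff_one_left, mul_zero, sub_zero] at h
  rwa [sum_halfCentralBinom_mul_tanhAddCoeff (by omega)] at h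

lemma tanhAddCompCoeff_add_two_left (n m : ℕ) :
    ((n : ℚ) + 2) * tanhAddCompCoeff (n + 2) m
      = tanhAddCompCoeff (n + 1) m + n * tanhAddCompCoeff n m := by
  have h := sum_halfCentralBinom_mul_sub (fun k => tanhAddCoeff k (n + 1) m) (n + m + 2)
  rw [tanhAddCoeff_eq_zero (by omega), tanhAddCoeff_eq_zero (by omega),
    sum_halfCentralBinom_mul_tanhAddCoeff (by omega)] at h
  simp only [← tanhAddCoeff_add_two_left, mul_zero, sub_zero] at h
  rw [← sum_halfCentralBinom_mul_tanhAddCoeff (show n + 2 + m < n + m + 2 + 1 by omega),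
    ← sum_halfCentralBinom_mul_tanhAddCoeff (show n + m < n + m + 2 + 1 by omega), ← h,
    ← sub_eq_iff_eq_add, mul_sum, mul_sum, ← sum_sub_distrib]
  exact sum_congr rfl fun k _ => by ring

lemma tanhAddCompCoeff_eq_mul (n m : ℕ) :
    tanhAddCompCoeff n m = halfCentralBinom n * halfCentralBinom m := by
  induction n using Nat.twoStepInduction with
  | zero => simp [tanhAddCompCoeff, halfCentralBinom_zero]
  | one => rw [tanhAddCompCoeff_one_left, halfCentralBinom_one, one_mul]; simp [tanhAddCompCoeff]
  | more n ih₀ ih₁ =>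
    have h := tanhAddCompCoeff_add_two_left n m
    rw [ih₀, ih₁] at h
    have : ((n : ℚ) + 2) ≠ 0 := by positivity
    refine mul_left_cancel₀ this ?_
    linear_combination h - halfCentralBinom m * halfCentralBinom_add_two n

lemma sub_div_mul_multinomial_eq_choose_mul_choose {n m d : ℕ} (h : ¬(n = 0 ∧ m = 0))
    (hdn : d ≤ n) (hdm : d ≤ m) :
    ((n + m - 2 * d : ℕ) : ℚ) / ((n + m - d : ℕ) : ℚ)
        * (((n + m - d).factorial : ℚ) / ((n - d).factorial * (m - d).factorial * d.factorial))
      = ((n + m - d - 1).choose d * (n + m - 2 * d).choose (n - d) : ℕ) := by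
  obtain ⟨a, rfl⟩ := Nat.exists_eq_add_of_le' hdn
  obtain ⟨b, rfl⟩ := Nat.exists_eq_add_of_le' hdm
  rw [show a + d + (b + d) - 2 * d = a + b by omega, show a + d + (b + d) - d = a + b + d by omega,
    Nat.add_sub_cancel, Nat.add_sub_cancel]
  rcases Nat.eq_zero_or_pos (a + b) with hab | hab
  · rw [hab, Nat.choose_eq_zero_of_lt (by omega)]
    simp
  · obtain ⟨r, hr⟩ := Nat.exists_eq_add_one_of_ne_zero hab.ne'
    rw [hr, show r + 1 + d - 1 = r + d by omega, Nat.cast_mul,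
      Nat.cast_choose ℚ (Nat.le_add_left d r), Nat.cast_choose ℚ (show a ≤ r + 1 by omega),
      Nat.add_sub_cancel, show r + 1 - a = b by omega, show r + 1 + d = r + d + 1 by omega,
      Nat.factorial_succ, Nat.factorial_succ r]
    push_cast
    field_simp

theorem central_binom_delannoy_identity (n m : ℕ) (h : ¬(n = 0 ∧ m = 0)) :
    ∑ d ∈ Finset.range (min n m + 1),
      (-1 : ℚ) ^ d / 4 ^ ((n + m - 2 * d) / 2)
        * ((n + m - 2 * d : ℕ) : ℚ) / ((n + m - d : ℕ) : ℚ)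
        * (((n + m - d).factorial : ℚ) /
            ((n - d).factorial * (m - d).factorial * d.factorial))
        * ((2 * ((n + m - 2 * d) / 2)).choose ((n + m - 2 * d) / 2) : ℚ)
    = (1 / 4 ^ (n / 2 + m / 2))
        * ((2 * (n / 2)).choose (n / 2) : ℚ) * ((2 * (m / 2)).choose (m / 2) : ℚ) := by
  have hrhs : (1 / 4 ^ (n / 2 + m / 2)) * ((2 * (n / 2)).choose (n / 2) : ℚ)
      * ((2 * (m / 2)).choose (m / 2) : ℚ) = halfCentralBinom n * halfCentralBinom m := by
    simp only [halfCentralBinom, Nat.centralBinom_eq_two_mul_choose, pow_add]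
    ring
  rw [hrhs, ← tanhAddCompCoeff_eq_mul, tanhAddCompCoeff]
  refine sum_congr rfl fun d hd => ?_
  rw [mem_range, Nat.lt_succ_iff, le_min_iff] at hd
  rw [← sub_div_mul_multinomial_eq_choose_mul_choose h hd.1 hd.2, halfCentralBinom,
    Nat.centralBinom_eq_two_mul_choose]
  ring
end

section
/- Let \beta = (b_1, ..., b_k) be a composition of a positive integer n. Then, as an identity of rational numbers: \sum over all compositions \alpha = (a_1, ..., a_h) of n that are refined by \beta and whose first part a_1 is odd, of (-1)^{k_e(\alpha)} * (1/4^{\lfloor k_o(\alpha)/2 \rfloor}) * binom(2\lfloor k_o(\alpha)/2 \rfloor, \lfloor k_o(\alpha)/2 \rfloor), equals (1/4^{\lfloor k_o(\beta)/2 \rfloor}) * binom(2\lfloor k_o(\beta)/2 \rfloor, \lfloor k_o(\beta)/2 \rfloor) if b_k is odd, and equals 0 if b_k is even. -/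
/-- The number of even parts of a list of naturals. -/
def numEvenParts (l : List ℕ) : ℕ := (l.filter (fun x => x % 2 = 0)).length

/-- The number of odd parts of a list of naturals. -/
def numOddParts (l : List ℕ) : ℕ := (l.filter (fun x => x % 2 = 1)).length

/-- All coarsenings ("refined-by" lists) of a list: group consecutive entries and sum. -/
def refts : List ℕ → List (List ℕ)
  | [] => [[]]
  | [a] => [[a]]
  | a :: b :: l =>
      ((refts (b :: l)).map fun σ => a :: σ) ++
        ((refts (b :: l)).map fun σ => (a + σ.headI) :: σ.tail)

lemma refts_ne_nil : ∀ (l : List ℕ), l ≠ [] → ∀ σ ∈ refts l, σ ≠ [] := by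
  intro l
  induction l with
  | nil => simp
  | cons a l ih =>
    intro _ σ hσ
    cases l with
    | nil => simp [refts] at hσ; simp [hσ]
    | cons b l =>
      simp only [refts, List.mem_append, List.mem_map] at hσ
      rcases hσ with ⟨τ, _, rfl⟩ | ⟨τ, _, rfl⟩ <;> simp

lemma refts_sum : ∀ (l : List ℕ), ∀ σ ∈ refts l, σ.sum = l.sum := by
  intro l
  induction l with
  | nil => simp [refts]
  | cons a l ih =>
    intro σ hσ
    cases l with
    | nil => simp [refts] at hσ; simp [hσ]
    | cons b l =>
      simp only [refts, List.mem_append, List.mem_map] at hσ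
      rcases hσ with ⟨τ, hτ, rfl⟩ | ⟨τ, hτ, rfl⟩
      · simp [ih τ hτ]
      · have hne : τ ≠ [] := refts_ne_nil _ (by simp) τ hτ
        obtain ⟨h, t, rfl⟩ : ∃ h t, τ = h :: t := by
          cases τ with | nil => exact absurd rfl hne | cons h t => exact ⟨h, t, rfl⟩
        have := ih _ hτ
        simp only [List.sum_cons, List.headI_cons, List.tail_cons] at this ⊢
        omega

lemma refts_pos : ∀ (l : List ℕ), (∀ x ∈ l, 0 < x) → ∀ σ ∈ refts l, ∀ x ∈ σ, 0 < x := by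
  intro l
  induction l with
  | nil => simp [refts]
  | cons a l ih =>
    intro hpos σ hσ
    cases l with
    | nil =>
      simp [refts] at hσ; subst hσ
      simpa using hpos
    | cons b l =>
      have hpos' : ∀ x ∈ b :: l, 0 < x := fun x hx => hpos x (List.mem_cons_of_mem _ hx)
      simp only [refts, List.mem_append, List.mem_map] at hσ
      rcases hσ with ⟨τ, hτ, rfl⟩ | ⟨τ, hτ, rfl⟩
      · intro x hx
        rcases List.mem_cons.1 hx with rfl | hx
        · exact hpos _ (by simp)
        · exact ih hpos' τ hτ x hx
      · have hne : τ ≠ [] := refts_ne_nil _ (by simp) τ hτ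
        intro x hx
        rcases List.mem_cons.1 hx with rfl | hx
        · have : 0 < a := hpos _ (by simp)
          omega
        · exact ih hpos' τ hτ x (List.mem_of_mem_tail hx)

lemma refts_take : ∀ (l : List ℕ), ∀ σ ∈ refts l, ∀ i, ∃ j, (σ.take i).sum = (l.take j).sum := by
  intro l
  induction l with
  | nil => intro σ hσ i; simp [refts] at hσ; exact ⟨0, by simp [hσ]⟩
  | cons a l ih =>
    intro σ hσ i
    cases l with
    | nil =>
      simp [refts] at hσ; subst hσ
      match i with
      | 0 => exact ⟨0, by simp⟩
      | (i + 1) => exact ⟨1, by simp⟩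
    | cons b l =>
      simp only [refts, List.mem_append, List.mem_map] at hσ
      rcases hσ with ⟨τ, hτ, rfl⟩ | ⟨τ, hτ, rfl⟩
      · match i with
        | 0 => exact ⟨0, by simp⟩
        | (i + 1) =>
          obtain ⟨j, hj⟩ := ih τ hτ i
          exact ⟨j + 1, by simp [hj]⟩
      · obtain ⟨h, t, rfl⟩ := List.exists_cons_of_ne_nil (refts_ne_nil _ (by simp) τ hτ)
        match i with
        | 0 => exact ⟨0, by simp⟩
        | (i + 1) =>
          obtain ⟨j, hj⟩ := ih _ hτ (i + 1)
          refine ⟨j + 1, ?_⟩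
          simp only [List.take_succ_cons, List.sum_cons, List.headI_cons, List.tail_cons] at hj ⊢
          omega

lemma refts_nodup : ∀ (l : List ℕ), (∀ x ∈ l, 0 < x) → (refts l).Nodup := by
  intro l
  induction l with
  | nil => simp [refts]
  | cons a l ih =>
    intro hpos
    cases l with
    | nil => simp [refts]
    | cons b l =>
      have hpos' : ∀ x ∈ b :: l, 0 < x := fun x hx => hpos x (List.mem_cons_of_mem _ hx)
      have hnd := ih hpos'
      rw [show refts (a :: b :: l) = _ from rfl]
      refine List.Nodup.append ?_ ?_ ?_
      · exact hnd.map (fun x y hxy => by injection hxy)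
      · refine hnd.map_on ?_
        intro x hx y hy hxy
        obtain ⟨hx1, tx, rfl⟩ := List.exists_cons_of_ne_nil (refts_ne_nil _ (by simp) x hx)
        obtain ⟨hy1, ty, rfl⟩ := List.exists_cons_of_ne_nil (refts_ne_nil _ (by simp) y hy)
        simp only [List.headI_cons, List.tail_cons] at hxy
        injection hxy with h1 h2
        have : hx1 = hy1 := by omega
        rw [this, h2]
      · intro x hx hy
        simp only [List.mem_map] at hx hy
        obtain ⟨τ₁, hτ₁, rfl⟩ := hx
        obtain ⟨τ₂, hτ₂, heq⟩ := hy
        obtain ⟨h2, t2, rfl⟩ := List.exists_cons_of_ne_nil (refts_ne_nil _ (by simp) τ₂ hτ₂)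
        simp only [List.headI_cons, List.tail_cons] at heq
        injection heq with h1 _
        have : 0 < h2 := refts_pos _ hpos' _ hτ₂ h2 (by simp)
        omega

lemma refts_complete : ∀ (l : List ℕ), l ≠ [] → (∀ x ∈ l, 0 < x) →
    ∀ σ : List ℕ, (∀ x ∈ σ, 0 < x) → σ.sum = l.sum →
    (∀ i, ∃ j, (σ.take i).sum = (l.take j).sum) → σ ∈ refts l := by
  intro l
  induction l with
  | nil => simp
  | cons a l ih =>
    intro _ hpos σ hσpos hsum hC
    have ha : 0 < a := hpos a (by simp)
    obtain ⟨h, t, rfl⟩ : ∃ h t, σ = h :: t := by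
      cases σ with
      | nil => simp at hsum; omega
      | cons h t => exact ⟨h, t, rfl⟩
    have hh : 0 < h := hσpos h (by simp)
    cases l with
    | nil =>
      -- must show h :: t = [a]
      obtain ⟨j, hj⟩ := hC 1
      simp only [List.take_succ_cons, List.take_nil, List.sum_cons, List.sum_nil] at hj
      have hha : h = a := by
        match j with
        | 0 => simp at hj; omega
        | 1 => simpa using hj
        | (j + 2) => simpa using hj
      have ht : t = [] := by
        cases t with
        | nil => rfl
        | cons x t =>
          have : 0 < x := hσpos x (by simp)
          simp at hsum
          omega
      simp [refts, hha, ht]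
    | cons b l =>
      have hpos' : ∀ x ∈ b :: l, 0 < x := fun x hx => hpos x (List.mem_cons_of_mem _ hx)
      have htpos : ∀ x ∈ t, 0 < x := fun x hx => hσpos x (List.mem_cons_of_mem _ hx)
      obtain ⟨j, hj⟩ := hC 1
      simp only [List.take_succ_cons, List.take_zero, List.sum_cons, List.sum_nil] at hj
      obtain ⟨j', rfl⟩ : ∃ j', j = j' + 1 := by
        match j with
        | 0 => simp at hj; omega
        | (j' + 1) => exact ⟨j', rfl⟩
      simp only [List.take_succ_cons, List.sum_cons] at hj
      set s' := ((b :: l).take j').sum with hs'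
      -- hj : h + 0 = a + s' (roughly)
      by_cases hs0 : s' = 0
      · -- σ = a :: t
        have hha : h = a := by omega
        have ht : t ∈ refts (b :: l) := by
          refine ih (by simp) hpos' t htpos ?_ ?_
          · have := hsum; simp only [List.sum_cons] at this ⊢; omega
          · intro i
            obtain ⟨j, hj2⟩ := hC (i + 1)
            simp only [List.take_succ_cons, List.sum_cons] at hj2
            obtain ⟨j'', rfl⟩ : ∃ j'', j = j'' + 1 := by
              match j with
              | 0 => simp at hj2; omega
              | (j'' + 1) => exact ⟨j'', rfl⟩
            simp only [List.take_succ_cons, List.sum_cons] at hj2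
            exact ⟨j'', by omega⟩
        subst hha
        exact List.mem_append_left _ (List.mem_map.2 ⟨t, ht, rfl⟩)
      · -- σ = (a + s') :: t with s' :: t ∈ refts (b :: l)
        have hτ : (s' :: t) ∈ refts (b :: l) := by
          refine ih (by simp) hpos' _ ?_ ?_ ?_
          · intro x hx
            rcases List.mem_cons.1 hx with rfl | hx
            · omega
            · exact htpos x hx
          · have := hsum; simp only [List.sum_cons] at this ⊢; omega
          · intro i
            match i with
            | 0 => exact ⟨0, by simp⟩
            | (i + 1) =>
              obtain ⟨j, hj2⟩ := hC (i + 1)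
              simp only [List.take_succ_cons, List.sum_cons] at hj2
              obtain ⟨j'', rfl⟩ : ∃ j'', j = j'' + 1 := by
                match j with
                | 0 => simp at hj2; omega
                | (j'' + 1) => exact ⟨j'', rfl⟩
              simp only [List.take_succ_cons, List.sum_cons] at hj2
              refine ⟨j'', ?_⟩
              simp only [List.take_succ_cons, List.sum_cons]
              omega
        have : h = a + s' := by omega
        subst this
        refine List.mem_append_right _ (List.mem_map.2 ⟨s' :: t, hτ, ?_⟩)
        simp

lemma numEvenParts_cons (a : ℕ) (l : List ℕ) :
    numEvenParts (a :: l) = (if a % 2 = 0 then 1 else 0) + numEvenParts l := by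
  by_cases h : a % 2 = 0 <;> simp [numEvenParts, List.filter_cons, h, Nat.add_comm]

lemma numOddParts_cons (a : ℕ) (l : List ℕ) :
    numOddParts (a :: l) = (if a % 2 = 1 then 1 else 0) + numOddParts l := by
  by_cases h : a % 2 = 1 <;> simp [numOddParts, List.filter_cons, h, Nat.add_comm]

lemma getLastD_ne_nil (l : List ℕ) (hl : l ≠ []) (d d' : ℕ) : l.getLastD d = l.getLastD d' := by
  cases l with
  | nil => exact absurd rfl hl
  | cons a l => rw [List.getLastD_cons, List.getLastD_cons]

lemma key_sum (l : List ℕ) (hl : l ≠ []) : ∀ (u : ℕ → ℚ),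
    ((refts l).map (fun σ =>
        if σ.headI % 2 = 1 then (-1 : ℚ) ^ numEvenParts σ * u (numOddParts σ) else 0)).sum
    = if l.getLastD 0 % 2 = 1 then u (numOddParts l) else 0 := by
  induction l with
  | nil => exact absurd rfl hl
  | cons a l ih =>
    intro u
    cases l with
    | nil =>
      rcases Nat.mod_two_eq_zero_or_one a with h | h <;>
        simp [refts, numEvenParts_cons, numOddParts_cons, numEvenParts, numOddParts, h]
    | cons b l =>
      have hbl : (b :: l) ≠ [] := by simp
      rw [show refts (a :: b :: l) =
            ((refts (b :: l)).map fun σ => a :: σ) ++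
              ((refts (b :: l)).map fun σ => (a + σ.headI) :: σ.tail) from rfl,
        List.map_append, List.sum_append, List.map_map, List.map_map, ← List.sum_map_add]
      rcases Nat.mod_two_eq_zero_or_one a with ha | ha
      · -- a even : combined term equals the term for σ itself
        have congr1 : ∀ σ ∈ refts (b :: l),
            (((fun σ => if σ.headI % 2 = 1 then (-1 : ℚ) ^ numEvenParts σ * u (numOddParts σ)
                  else 0) ∘ fun σ => a :: σ) σ +
             ((fun σ => if σ.headI % 2 = 1 then (-1 : ℚ) ^ numEvenParts σ * u (numOddParts σ)
                  else 0) ∘ fun σ => (a + σ.headI) :: σ.tail) σ)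
            = (fun σ => if σ.headI % 2 = 1 then (-1 : ℚ) ^ numEvenParts σ * u (numOddParts σ)
                  else 0) σ := by
          intro σ hσ
          obtain ⟨h, t, rfl⟩ := List.exists_cons_of_ne_nil (refts_ne_nil _ hbl σ hσ)
          simp only [Function.comp_apply, List.headI_cons, List.tail_cons,
            numEvenParts_cons, numOddParts_cons]
          have hah : (a + h) % 2 = h % 2 := by omega
          rw [hah]
          rcases Nat.mod_two_eq_zero_or_one h with hh | hh <;> simp [hh, ha]
        rw [List.map_congr_left congr1, ih hbl u]
        have hgl : (a :: b :: l).getLastD 0 = (b :: l).getLastD 0 := by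
          rw [List.getLastD_cons]; exact getLastD_ne_nil (b :: l) (by simp) a 0
        rw [hgl, numOddParts_cons a (b :: l)]
        simp [ha]
      · -- a odd
        have congr1 : ∀ σ ∈ refts (b :: l),
            (((fun σ => if σ.headI % 2 = 1 then (-1 : ℚ) ^ numEvenParts σ * u (numOddParts σ)
                  else 0) ∘ fun σ => a :: σ) σ +
             ((fun σ => if σ.headI % 2 = 1 then (-1 : ℚ) ^ numEvenParts σ * u (numOddParts σ)
                  else 0) ∘ fun σ => (a + σ.headI) :: σ.tail) σ)
            = (fun σ => if σ.headI % 2 = 1 then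
                  (-1 : ℚ) ^ numEvenParts σ * (fun m => u (m + 1)) (numOddParts σ)
                  else 0) σ := by
          intro σ hσ
          obtain ⟨h, t, rfl⟩ := List.exists_cons_of_ne_nil (refts_ne_nil _ hbl σ hσ)
          simp only [Function.comp_apply, List.headI_cons, List.tail_cons,
            numEvenParts_cons, numOddParts_cons]
          have hah : (a + h) % 2 = (h + 1) % 2 := by omega
          rw [hah]
          rcases Nat.mod_two_eq_zero_or_one h with hh | hh
          · have hh1 : (h + 1) % 2 = 1 := by omega
            have hh0 : ¬ (h % 2 = 1) := by omega
            simp only [ha, hh, hh1, hh0, if_true, if_false, if_neg, reduceIte]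
            norm_num
            try ring
          · have hh1 : (h + 1) % 2 = 0 := by omega
            simp only [ha, hh, hh1, if_true, reduceIte]
            norm_num
            try ring
        rw [List.map_congr_left congr1, ih hbl (fun m => u (m + 1))]
        have hgl : (a :: b :: l).getLastD 0 = (b :: l).getLastD 0 := by
          rw [List.getLastD_cons]; exact getLastD_ne_nil (b :: l) (by simp) a 0
        rw [hgl, numOddParts_cons a (b :: l)]
        simp [ha, Nat.add_comm]

lemma mem_bdry {n : ℕ} (c : Composition n) (x : Fin (n + 1)) :
    x ∈ c.boundaries ↔ ∃ i, (c.blocks.take i).sum = (x : ℕ) := by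
  constructor
  · intro hx
    rw [Composition.boundaries, Finset.mem_map] at hx
    obtain ⟨i, _, rfl⟩ := hx
    exact ⟨i, rfl⟩
  · rintro ⟨i, hi⟩
    rw [Composition.boundaries, Finset.mem_map]
    have hmin : min i c.length < c.length + 1 := by omega
    refine ⟨⟨min i c.length, hmin⟩, Finset.mem_univ _, ?_⟩
    have : c.sizeUpTo (min i c.length) = (x : ℕ) := by
      rcases le_or_gt i c.length with h | h
      · rw [min_eq_left h, Composition.sizeUpTo]; exact hi
      · have h1 : min i c.length = c.length := by omega
        rw [h1, Composition.sizeUpTo]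
        rw [List.take_of_length_le (by rw [c.blocks_length]; omega)] at hi
        rw [← c.blocks_length, List.take_length]
        exact hi
    apply Fin.ext
    exact this

lemma filter_map_sum (p : List ℕ → Prop) [DecidablePred p] (f : List ℕ → ℚ) :
    ∀ L : List (List ℕ),
    ((L.filter fun x => decide (p x)).map f).sum = (L.map fun x => if p x then f x else 0).sum := by
  intro L
  induction L with
  | nil => simp
  | cons x L ih => by_cases hx : p x <;> simp [List.filter_cons, hx, ih]

theorem refinement_central_binom_sum (n : ℕ) (hn : 0 < n) (β : Composition n) :
    ∑ α ∈ Finset.univ.filter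
        (fun α : Composition n =>
          α.boundaries ⊆ β.boundaries ∧ α.blocks.headI % 2 = 1),
      (-1 : ℚ) ^ numEvenParts α.blocks
        * (1 / 4 ^ (numOddParts α.blocks / 2))
        * ((2 * (numOddParts α.blocks / 2)).choose (numOddParts α.blocks / 2) : ℚ)
    = if β.blocks.getLastD 0 % 2 = 1 then
        (1 / 4 ^ (numOddParts β.blocks / 2))
          * ((2 * (numOddParts β.blocks / 2)).choose (numOddParts β.blocks / 2) : ℚ)
      else 0 := by
  classical
  set u : ℕ → ℚ := fun m => (1 / 4 ^ (m / 2)) * ((2 * (m / 2)).choose (m / 2) : ℚ) with hu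
  set w : List ℕ → ℚ := fun σ => (-1 : ℚ) ^ numEvenParts σ * u (numOddParts σ) with hw
  have hbne : β.blocks ≠ [] := by
    intro h
    have := β.blocks_sum
    rw [h] at this
    simp at this
    omega
  have hbpos : ∀ x ∈ β.blocks, 0 < x := fun x hx => β.blocks_pos hx
  set L : List (List ℕ) :=
    (refts β.blocks).filter (fun σ => σ.headI % 2 = 1) with hL
  have hLnd : L.Nodup := (refts_nodup β.blocks hbpos).filter _
  -- Step 1 : the Finset sum equals the sum over L.toFinset
  have step1 :
      ∑ α ∈ Finset.univ.filter
          (fun α : Composition n =>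
            α.boundaries ⊆ β.boundaries ∧ α.blocks.headI % 2 = 1),
        w α.blocks = ∑ σ ∈ L.toFinset, w σ := by
    refine Finset.sum_bij' (fun α _ => α.blocks) (fun σ hσ => ?_) ?_ ?_ ?_ ?_ ?_
    · -- the inverse : build a composition from σ
      refine ⟨σ, ?_, ?_⟩
      · intro i hi
        have hσ' : σ ∈ refts β.blocks := by
          rw [List.mem_toFinset, hL, List.mem_filter] at hσ
          exact hσ.1
        exact refts_pos β.blocks hbpos σ hσ' i hi
      · have hσ' : σ ∈ refts β.blocks := by
          rw [List.mem_toFinset, hL, List.mem_filter] at hσ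
          exact hσ.1
        rw [refts_sum β.blocks σ hσ', β.blocks_sum]
    · -- forward membership
      intro α hα
      rw [Finset.mem_filter] at hα
      obtain ⟨-, hsub, hhead⟩ := hα
      rw [List.mem_toFinset, hL, List.mem_filter]
      constructor
      · refine refts_complete β.blocks hbne hbpos α.blocks
          (fun x hx => α.blocks_pos hx) (by rw [α.blocks_sum, β.blocks_sum]) ?_
        intro i
        have hle : (α.blocks.take i).sum ≤ n := by
          have h1 := List.sum_take_add_sum_drop α.blocks i
          have h2 := α.blocks_sum
          omega
        have hx : (⟨(α.blocks.take i).sum, by omega⟩ : Fin (n + 1)) ∈ α.boundaries := by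
          rw [mem_bdry]
          exact ⟨i, rfl⟩
        have hx' := hsub hx
        rw [mem_bdry] at hx'
        obtain ⟨j, hj⟩ := hx'
        exact ⟨j, by rw [hj]⟩
      · simpa using hhead
    · -- backward membership
      intro σ hσ
      have hσmem := hσ
      rw [List.mem_toFinset, hL, List.mem_filter] at hσmem
      obtain ⟨hσr, hσh⟩ := hσmem
      rw [Finset.mem_filter]
      refine ⟨Finset.mem_univ _, ?_, by simpa using hσh⟩
      intro x hx
      rw [mem_bdry] at hx ⊢
      obtain ⟨i, hi⟩ := hx
      obtain ⟨j, hj⟩ := refts_take β.blocks σ hσr i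
      exact ⟨j, by rw [← hj]; exact hi⟩
    · intro α hα
      exact Composition.ext rfl
    · intro σ hσ
      rfl
    · intro α hα
      rfl
  have step2 : ∑ σ ∈ L.toFinset, w σ = (L.map w).sum := List.sum_toFinset w hLnd
  have step3 : (L.map w).sum =
      ((refts β.blocks).map (fun σ =>
        if σ.headI % 2 = 1 then (-1 : ℚ) ^ numEvenParts σ * u (numOddParts σ) else 0)).sum := by
    rw [hL]
    exact filter_map_sum (fun σ => σ.headI % 2 = 1) w (refts β.blocks)
  have lhs_eq :
      ∑ α ∈ Finset.univ.filter
          (fun α : Composition n =>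
            α.boundaries ⊆ β.boundaries ∧ α.blocks.headI % 2 = 1),
        (-1 : ℚ) ^ numEvenParts α.blocks
          * (1 / 4 ^ (numOddParts α.blocks / 2))
          * ((2 * (numOddParts α.blocks / 2)).choose (numOddParts α.blocks / 2) : ℚ)
      = ∑ α ∈ Finset.univ.filter
          (fun α : Composition n =>
            α.boundaries ⊆ β.boundaries ∧ α.blocks.headI % 2 = 1),
        w α.blocks := by
    refine Finset.sum_congr rfl fun α _ => ?_
    rw [hw, hu]
    ring
  rw [lhs_eq, step1, step2, step3, key_sum β.blocks hbne u]
end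

section
/- For any positive integer h, the central Catalan numbers satisfy, as rational numbers: \sum_{j=0}^{h} C_4(j) * C_4(h-j) = 2 * \sum_{j=0}^{h} C_3(j) * C_1(h-j). -/
/-- The central Catalan number `C_1(h) = C(2h+1, h+1)/2`. -/
def centralCatalan1 (h : ℕ) : ℚ := bivariateCatalan (2 * h + 1) (h + 1) / 2

/-- The central Catalan number `C_2(h) = C(2h, h+1)/2`. -/
def centralCatalan2 (h : ℕ) : ℚ := bivariateCatalan (2 * h) (h + 1) / 2

/-- The central Catalan number `C_3(h) = C(2h, h)/2`. -/
def centralCatalan3 (h : ℕ) : ℚ := bivariateCatalan (2 * h) h / 2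

/-- The central Catalan number `C_4(h) = C(2h+1, h)/2`. -/
def centralCatalan4 (h : ℕ) : ℚ := bivariateCatalan (2 * h + 1) h / 2

/-!
Let `G_x(z) = ∑ₙ (4n+x choose n) zⁿ`. Since `C₄(j) = (4j+1 choose j)`, `C₃(j) = (4j choose j)/2`
and `C₁(j) = (4j+2 choose j)`, the identity is the coefficient of `zʰ` in `G₁² = G₀ G₂`.
If `B = 1 + z B⁴` is the generating function of the quaternary Fuss–Catalan numbers, then
`Bʳ G_x = G_{x+r}` (a Hagen–Rothe convolution), so `G₁ = B G₀`, `G₂ = B G₁` and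
`G₁² = G₁ B G₀ = G₂ G₀`.
-/

open Finset PowerSeries

/-- The coefficient of `zᵏ` in `Bʳ`, where `B = 1 + z Bᵖ`, computed from
`B^{r+1} = Bʳ + z B^{r+p}`. -/
def fussCatalanPowCoeff (p : ℕ) : ℕ → ℕ → ℕ
  | _, 0 => 1
  | 0, _ + 1 => 0
  | r + 1, k + 1 => fussCatalanPowCoeff p r (k + 1) + fussCatalanPowCoeff p (r + p) k
termination_by r k => (k, r)

section

variable (R : Type*) [CommSemiring R] (p : ℕ)

noncomputable def fussCatalanPow (r : ℕ) : PowerSeries R :=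
  mk fun k => (fussCatalanPowCoeff p r k : R)

noncomputable def chooseSeries (x : ℕ) : PowerSeries R :=
  mk fun n => ((p * n + x).choose n : R)

theorem fussCatalanPow_zero : fussCatalanPow R p 0 = 1 := by
  ext (_ | k) <;> simp [fussCatalanPow, fussCatalanPowCoeff, coeff_one]

theorem fussCatalanPow_succ (r : ℕ) :
    fussCatalanPow R p (r + 1) = fussCatalanPow R p r + X * fussCatalanPow R p (r + p) := by
  ext (_ | k) <;> simp [fussCatalanPow, fussCatalanPowCoeff, coeff_succ_X_mul]

theorem coeff_fussCatalanPow_mul_chooseSeries (x n r : ℕ) :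
    coeff n (fussCatalanPow R p r * chooseSeries R p x) = ((p * n + (x + r)).choose n : R) := by
  induction n generalizing r with
  | zero => simp [fussCatalanPow, chooseSeries, fussCatalanPowCoeff]
  | succ n ih =>
    induction r with
    | zero => simp [fussCatalanPow_zero, chooseSeries]
    | succ r ihr =>
      rw [fussCatalanPow_succ, add_mul, map_add, mul_assoc, coeff_succ_X_mul, ihr, ih]
      have pascal : (p * (n + 1) + (x + (r + 1))).choose (n + 1) =
          (p * (n + 1) + (x + r)).choose (n + 1) + (p * n + (x + (r + p))).choose n := by
        rw [show p * (n + 1) + (x + (r + 1)) = p * (n + 1) + (x + r) + 1 by ring,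
          show p * n + (x + (r + p)) = p * (n + 1) + (x + r) by ring, Nat.choose_succ_succ', add_comm]
      rw [pascal, Nat.cast_add]

theorem fussCatalanPow_mul_chooseSeries (x r : ℕ) :
    fussCatalanPow R p r * chooseSeries R p x = chooseSeries R p (x + r) := by
  ext n
  rw [coeff_fussCatalanPow_mul_chooseSeries]
  simp [chooseSeries]

theorem chooseSeries_one_mul_self :
    chooseSeries R p 1 * chooseSeries R p 1 = chooseSeries R p 0 * chooseSeries R p 2 := by
  calc chooseSeries R p 1 * chooseSeries R p 1
      = chooseSeries R p 1 * (fussCatalanPow R p 1 * chooseSeries R p 0) := by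
        rw [fussCatalanPow_mul_chooseSeries]
    _ = chooseSeries R p 0 * (fussCatalanPow R p 1 * chooseSeries R p 1) := by ring
    _ = chooseSeries R p 0 * chooseSeries R p 2 := by rw [fussCatalanPow_mul_chooseSeries]

theorem coeff_chooseSeries_mul (x y n : ℕ) :
    coeff n (chooseSeries R p x * chooseSeries R p y) =
      ∑ j ∈ range (n + 1), ((p * j + x).choose j : R) * ((p * (n - j) + y).choose (n - j)) := by
  rw [coeff_mul, Nat.sum_antidiagonal_eq_sum_range_succ_mk]
  simp [chooseSeries]

end

theorem centralCatalan4_eq (j : ℕ) : centralCatalan4 j = ((4 * j + 1).choose j : ℚ) := by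
  rw [centralCatalan4, bivariateCatalan, Nat.cast_choose ℚ (by omega : j ≤ 4 * j + 1),
    show 2 * (2 * j + 1) = 4 * j + 1 + 1 by ring, show 2 * j + 1 + j = 4 * j + 1 - j by omega,
    Nat.factorial_succ (4 * j + 1), Nat.factorial_succ (2 * j)]
  push_cast
  field_simp
  ring

theorem centralCatalan3_eq (j : ℕ) : centralCatalan3 j = ((4 * j).choose j : ℚ) / 2 := by
  rw [centralCatalan3, bivariateCatalan, Nat.cast_choose ℚ (by omega : j ≤ 4 * j),
    show 2 * (2 * j) = 4 * j by ring, show 2 * j + j = 4 * j - j by omega]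
  field_simp

theorem centralCatalan1_eq (j : ℕ) : centralCatalan1 j = ((4 * j + 2).choose j : ℚ) := by
  rw [centralCatalan1, bivariateCatalan, Nat.cast_choose ℚ (by omega : j ≤ 4 * j + 2),
    show 2 * (2 * j + 1) = 4 * j + 2 by ring, show 2 * j + 1 + (j + 1) = 4 * j + 2 - j by omega,
    show 2 * (j + 1) = 2 * j + 1 + 1 by ring, Nat.factorial_succ (2 * j + 1), Nat.factorial_succ j]
  push_cast
  field_simp
  ring

theorem central_catalan_convolution_eight_general (h : ℕ) :
    ∑ j ∈ Finset.range (h + 1), centralCatalan4 j * centralCatalan4 (h - j)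
    = 2 * ∑ j ∈ Finset.range (h + 1), centralCatalan3 j * centralCatalan1 (h - j) := by
  calc ∑ j ∈ range (h + 1), centralCatalan4 j * centralCatalan4 (h - j)
      = coeff h (chooseSeries ℚ 4 1 * chooseSeries ℚ 4 1) := by
        simp only [coeff_chooseSeries_mul, centralCatalan4_eq]
    _ = coeff h (chooseSeries ℚ 4 0 * chooseSeries ℚ 4 2) := by rw [chooseSeries_one_mul_self]
    _ = 2 * ∑ j ∈ range (h + 1), centralCatalan3 j * centralCatalan1 (h - j) := by
        simp only [coeff_chooseSeries_mul, add_zero, mul_sum, centralCatalan3_eq, centralCatalan1_eq]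
        exact sum_congr rfl fun j _ => by ring

theorem central_catalan_convolution_eight (h : ℕ) (hh : 0 < h) :
    ∑ j ∈ Finset.range (h + 1), centralCatalan4 j * centralCatalan4 (h - j)
    = 2 * ∑ j ∈ Finset.range (h + 1), centralCatalan3 j * centralCatalan1 (h - j) :=
  central_catalan_convolution_eight_general h
end

section
/- For any non-negative integer n, \sum over all permutations \sigma of {1, ..., n} of (-1)^{p_-(\sigma)} * C(p_-(\sigma), \lfloor n/2 \rfloor - p_-(\sigma)) = 4^{\lfloor n/2 \rfloor}. -/
/-- The value `σ(i)` of a permutation `σ` of `{1, ..., n}` at a position `1 ≤ i ≤ n`,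
with the convention that the value is `0` outside this range (in particular `σ(0) = 0`). -/
def permVal (n : ℕ) (σ : Equiv.Perm (Fin n)) (i : ℕ) : ℕ :=
  if h : 1 ≤ i ∧ i ≤ n then ((σ ⟨i - 1, by omega⟩ : Fin n) : ℕ) + 1 else 0

/-- The number of interior peaks of a permutation `σ` of `{1, ..., n}`:
indices `2 ≤ i ≤ n-1` with `σ(i-1) < σ(i) > σ(i+1)`. -/
def interiorPeaks (n : ℕ) (σ : Equiv.Perm (Fin n)) : ℕ :=
  ((Finset.Icc 2 (n - 1)).filter
    (fun i => permVal n σ (i - 1) < permVal n σ i ∧ permVal n σ (i + 1) < permVal n σ i)).card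

/-- The number of augmented peaks of a permutation `σ` of `{1, ..., n}`:
indices `1 ≤ i ≤ n-1` with `σ(i-1) < σ(i) > σ(i+1)`, with the convention `σ(0) = 0`. -/
def augmentedPeaks (n : ℕ) (σ : Equiv.Perm (Fin n)) : ℕ :=
  ((Finset.Icc 1 (n - 1)).filter
    (fun i => permVal n σ (i - 1) < permVal n σ i ∧ permVal n σ (i + 1) < permVal n σ i)).card

/-! Inserting `n + 1` into a permutation `τ` of `{1, …, n}` with `k` interior peaks leaves `k`
peaks when it goes at either end or right next to a peak (`2k + 2` of the `n + 1` positions),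
and creates one new peak at each of the other `n - 1 - 2k` positions. Writing
`w n k = (-1)^k C(k, ⌊n/2⌋ - k)`, the sum over permutations of `{1, …, n + 1}` therefore equals
`∑_τ ((2k + 2) w (n+1) k + (n - 1 - 2k) w (n+1) (k+1))`, and two recurrences of the bivariate
Catalan numbers, one for each parity of `n`, turn each summand into
`4 ^ (⌊(n+1)/2⌋ - ⌊n/2⌋) * w n k`. -/

section insertAt

/-- For a sequence vanishing exactly outside `[1, n]`, such as `permVal n σ`, the positivity
conditions say `2 ≤ i ≤ n - 1`. -/
def IsInteriorPeak (f : ℕ → ℕ) (i : ℕ) : Prop :=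
  0 < f (i - 1) ∧ f (i - 1) < f i ∧ f (i + 1) < f i ∧ 0 < f (i + 1)

def insertAt (f : ℕ → ℕ) (p v i : ℕ) : ℕ :=
  if i < p then f i else if i = p then v else f (i - 1)

def shiftFrom (p i : ℕ) : ℕ :=
  if i < p then i else i + 1

variable {f : ℕ → ℕ} {p v i : ℕ}

theorem IsInteriorPeak.not_succ (h : IsInteriorPeak f i) : ¬ IsInteriorPeak f (i + 1) :=
  fun h' => by unfold IsInteriorPeak at h h'; simp only [Nat.add_sub_cancel] at h'; omega

theorem shiftFrom_injective (p : ℕ) : Function.Injective (shiftFrom p) := by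
  intro a b h; unfold shiftFrom at h; split_ifs at h <;> omega

theorem shiftFrom_ne (p i : ℕ) : shiftFrom p i ≠ p := by
  unfold shiftFrom; split_ifs <;> omega

theorem exists_shiftFrom_eq {m : ℕ} (hm : m ≠ p) : ∃ i, shiftFrom p i = m := by
  rcases lt_or_gt_of_ne hm with h | h
  · exact ⟨m, if_pos h⟩
  · exact ⟨m - 1, by rw [shiftFrom, if_neg (by omega)]; omega⟩

theorem insertAt_of_lt (h : i < p) : insertAt f p v i = f i := if_pos h

@[simp] theorem insertAt_self : insertAt f p v p = v := by simp [insertAt]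

theorem insertAt_of_gt (h : p < i) : insertAt f p v i = f (i - 1) := by
  simp [insertAt, h.not_gt, h.ne']

theorem isInteriorPeak_insertAt_shiftFrom (hv : ∀ i, f i < v) (i : ℕ) :
    IsInteriorPeak (insertAt f p v) (shiftFrom p i) ↔
      IsInteriorPeak f i ∧ i + 1 ≠ p ∧ i ≠ p := by
  unfold shiftFrom
  rcases lt_trichotomy (i + 1) p with h | rfl | h
  · simp only [IsInteriorPeak, if_pos (show i < p by omega), insertAt_of_lt h,
      insertAt_of_lt (show i < p by omega), insertAt_of_lt (show i - 1 < p by omega)]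
    omega
  · simp only [IsInteriorPeak, if_pos (lt_add_one i), insertAt_self, insertAt_of_lt (lt_add_one i)]
    have := hv i
    omega
  · simp only [IsInteriorPeak, if_neg (show ¬ i < p by omega), Nat.add_sub_cancel]
    rcases eq_or_lt_of_le (Nat.lt_succ_iff.mp h) with rfl | h
    · simp only [insertAt_self, insertAt_of_gt (lt_add_one p), Nat.add_sub_cancel]
      have := hv p
      omega
    · simp only [insertAt_of_gt h, insertAt_of_gt (show p < i + 1 by omega),
        insertAt_of_gt (show p < i + 1 + 1 by omega), Nat.add_sub_cancel]
      omega

theorem isInteriorPeak_insertAt_self (hv : ∀ i, f i < v) (hp : 1 ≤ p) :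
    IsInteriorPeak (insertAt f p v) p ↔ 0 < f (p - 1) ∧ 0 < f p := by
  simp only [IsInteriorPeak, insertAt_self, insertAt_of_lt (show p - 1 < p by omega),
    insertAt_of_gt (lt_add_one p), Nat.add_sub_cancel]
  have := hv (p - 1); have := hv p
  omega

theorem setOf_isInteriorPeak_insertAt (hv : ∀ i, f i < v) (hp : 1 ≤ p) :
    {i | IsInteriorPeak (insertAt f p v) i} =
      shiftFrom p '' ({i | IsInteriorPeak f i} \ {p - 1, p}) ∪
        {i | i = p ∧ 0 < f (p - 1) ∧ 0 < f p} := by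
  ext m
  rcases eq_or_ne m p with rfl | hm
  · simp [isInteriorPeak_insertAt_self hv hp, shiftFrom_ne]
  · obtain ⟨i, rfl⟩ := exists_shiftFrom_eq hm
    simp only [Set.mem_ofPred_eq, isInteriorPeak_insertAt_shiftFrom hv, Set.mem_union,
      (shiftFrom_injective p).mem_set_image, Set.mem_sdiff, Set.mem_insert_iff,
      Set.mem_singleton_iff, hm, false_and, or_false]
    exact and_congr_right fun _ => by omega

theorem ncard_setOf_isInteriorPeak_insertAt (hv : ∀ i, f i < v) (hp : 1 ≤ p)
    (hf : {i | IsInteriorPeak f i}.Finite) :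
    {i | IsInteriorPeak (insertAt f p v) i}.ncard =
      ({i | IsInteriorPeak f i} \ {p - 1, p}).ncard +
        if 0 < f (p - 1) ∧ 0 < f p then 1 else 0 := by
  rw [setOf_isInteriorPeak_insertAt hv hp, Set.ncard_union_eq _ ((hf.sdiff).image _)
    ((Set.finite_singleton p).subset fun i hi => hi.1),
    Set.ncard_image_of_injective _ (shiftFrom_injective p)]
  · split_ifs with h <;> simp [h]
  · exact Set.disjoint_left.mpr fun _ ⟨i, _, hi⟩ hp => shiftFrom_ne p i (hi.trans hp.1)

end insertAt

section permVal

variable {n : ℕ} (σ : Equiv.Perm (Fin n))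

@[simp] theorem permVal_zero : permVal n σ 0 = 0 := by simp [permVal]

theorem permVal_eq_zero_of_lt {i : ℕ} (h : n < i) : permVal n σ i = 0 := dif_neg (by omega)

theorem permVal_fin_succ (k : Fin n) : permVal n σ (k + 1) = σ k + 1 := by
  simp [permVal]

theorem permVal_pos_iff {i : ℕ} : 0 < permVal n σ i ↔ 1 ≤ i ∧ i ≤ n := by
  unfold permVal; split_ifs <;> simp_all

theorem permVal_lt (i : ℕ) : permVal n σ i < n + 1 := by
  unfold permVal; split_ifs <;> omega

end permVal

def insertMax {n : ℕ} (j : Fin (n + 1)) (τ : Equiv.Perm (Fin n)) : Equiv.Perm (Fin (n + 1)) :=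
  (finSuccEquiv' j).trans ((Equiv.optionCongr τ).trans (finSuccEquiv' (Fin.last n)).symm)

section insertMax

variable {n : ℕ} (j : Fin (n + 1)) (τ : Equiv.Perm (Fin n))

@[simp] theorem insertMax_apply_self : insertMax j τ j = Fin.last n := by
  simp [insertMax]

@[simp] theorem insertMax_apply_succAbove (k : Fin n) :
    insertMax j τ (j.succAbove k) = (τ k).castSucc := by
  simp [insertMax, Fin.succAbove_last]

theorem insertMax_injective :
    Function.Injective fun x : Fin (n + 1) × Equiv.Perm (Fin n) => insertMax x.1 x.2 := by
  rintro ⟨j, τ⟩ ⟨j', τ'⟩ h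
  simp only at h
  obtain rfl : j = j' := by
    by_contra hne
    obtain ⟨k, rfl⟩ := Fin.exists_succAbove_eq hne
    have := congr($h (j'.succAbove k))
    rw [insertMax_apply_self, insertMax_apply_succAbove] at this
    exact (Fin.castSucc_lt_last _).ne this.symm
  refine Prod.ext rfl (Equiv.ext fun k => Fin.castSucc_injective _ ?_)
  rw [← insertMax_apply_succAbove, h, insertMax_apply_succAbove]

theorem insertMax_bijective :
    Function.Bijective fun x : Fin (n + 1) × Equiv.Perm (Fin n) => insertMax x.1 x.2 := by
  rw [Fintype.bijective_iff_injective_and_card]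
  exact ⟨insertMax_injective, by simp [Fintype.card_perm, Nat.factorial_succ]⟩

theorem sum_perm_eq_sum_insertMax {M : Type*} [AddCommMonoid M]
    (g : Equiv.Perm (Fin (n + 1)) → M) :
    ∑ σ, g σ = ∑ τ : Equiv.Perm (Fin n), ∑ j : Fin (n + 1), g (insertMax j τ) := by
  rw [← insertMax_bijective.sum_comp, Fintype.sum_prod_type, Finset.sum_comm]

theorem permVal_insertMax :
    permVal (n + 1) (insertMax j τ) = insertAt (permVal n τ) (j + 1) (n + 1) := by
  funext i
  obtain _ | m := i
  · rw [insertAt_of_lt (Nat.succ_pos _), permVal_zero, permVal_zero]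
  rcases lt_or_ge n m with hm | hm
  · rw [insertAt_of_gt (by omega), permVal_eq_zero_of_lt _ (by omega), Nat.add_sub_cancel,
      permVal_eq_zero_of_lt _ hm]
  have hk := permVal_fin_succ (insertMax j τ) ⟨m, by omega⟩
  simp only at hk
  rw [hk]
  rcases lt_trichotomy m j with h | rfl | h
  · have hs : j.succAbove ⟨m, by omega⟩ = ⟨m, by omega⟩ :=
      Fin.succAbove_of_castSucc_lt _ _ h
    rw [insertAt_of_lt (by omega), ← hs, insertMax_apply_succAbove]
    exact (permVal_fin_succ τ ⟨m, _⟩).symm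
  · simp
  · obtain ⟨m, rfl⟩ : ∃ m', m = m' + 1 := ⟨m - 1, by omega⟩
    have hs : j.succAbove ⟨m, by omega⟩ = ⟨m + 1, by omega⟩ :=
      (Fin.succAbove_of_le_castSucc _ _ (Fin.le_def.mpr (by simp; omega))).trans rfl
    rw [insertAt_of_gt (by omega), ← hs, insertMax_apply_succAbove, Nat.add_sub_cancel]
    exact (permVal_fin_succ τ ⟨m, _⟩).symm

end insertMax

section interiorPeakSet

variable {n : ℕ} (σ : Equiv.Perm (Fin n))

def interiorPeakSet : Finset ℕ :=
  (Finset.Icc 2 (n - 1)).filter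
    (fun i => permVal n σ (i - 1) < permVal n σ i ∧ permVal n σ (i + 1) < permVal n σ i)

theorem card_interiorPeakSet : (interiorPeakSet σ).card = interiorPeaks n σ := rfl

variable {σ} in
theorem interiorPeakSet_bounds {i : ℕ} (h : i ∈ interiorPeakSet σ) : 2 ≤ i ∧ i ≤ n - 1 :=
  Finset.mem_Icc.mp (Finset.mem_filter.mp h).1

theorem mem_interiorPeakSet {i : ℕ} :
    i ∈ interiorPeakSet σ ↔ IsInteriorPeak (permVal n σ) i := by
  simp only [interiorPeakSet, Finset.mem_filter, Finset.mem_Icc, IsInteriorPeak, permVal_pos_iff]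
  omega

theorem coe_interiorPeakSet :
    (interiorPeakSet σ : Set ℕ) = {i | IsInteriorPeak (permVal n σ) i} :=
  Set.ext fun _ => mem_interiorPeakSet σ

variable {σ} in
theorem add_one_notMem_interiorPeakSet {i : ℕ} (h : i ∈ interiorPeakSet σ) :
    i + 1 ∉ interiorPeakSet σ := fun h' =>
  ((mem_interiorPeakSet σ).mp h).not_succ ((mem_interiorPeakSet σ).mp h')

/-- Positions are `1`-based, as in `permVal`. -/
def peakPreservingPositions : Finset ℕ :=
  {1, n + 1} ∪ interiorPeakSet σ ∪ (interiorPeakSet σ).map (addRightEmbedding 1)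

theorem peakPreservingPositions_subset : peakPreservingPositions σ ⊆ Finset.Icc 1 (n + 1) := by
  intro p hp
  simp only [peakPreservingPositions, Finset.mem_union, Finset.mem_insert, Finset.mem_singleton,
    Finset.mem_map, addRightEmbedding_apply] at hp
  rw [Finset.mem_Icc]
  rcases hp with ((rfl | rfl) | h) | ⟨i, h, rfl⟩
  · omega
  · omega
  · have := interiorPeakSet_bounds h; omega
  · have := interiorPeakSet_bounds h; omega

theorem card_peakPreservingPositions (hn : 1 ≤ n) :
    (peakPreservingPositions σ).card = 2 * interiorPeaks n σ + 2 := by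
  rw [peakPreservingPositions, Finset.card_union_of_disjoint, Finset.card_union_of_disjoint,
    Finset.card_map, Finset.card_pair (by omega), card_interiorPeakSet]
  · ring
  · refine Finset.disjoint_left.mpr fun p hp h => ?_
    simp only [Finset.mem_insert, Finset.mem_singleton] at hp
    have := interiorPeakSet_bounds h
    omega
  · refine Finset.disjoint_left.mpr fun p hp h => ?_
    obtain ⟨i, hi, rfl⟩ := Finset.mem_map.mp h
    simp only [Finset.mem_union, Finset.mem_insert, Finset.mem_singleton,
      addRightEmbedding_apply] at hp
    have := interiorPeakSet_bounds hi
    rcases hp with (hp | hp) | hp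
    · omega
    · omega
    · exact add_one_notMem_interiorPeakSet hi hp

theorem interiorPeaks_insertMax_eq_card_sdiff (j : Fin (n + 1)) :
    interiorPeaks (n + 1) (insertMax j σ) =
      (interiorPeakSet σ \ {(j : ℕ), (j : ℕ) + 1}).card +
        if 1 ≤ (j : ℕ) ∧ (j : ℕ) + 1 ≤ n then 1 else 0 := by
  have hfin : {i | IsInteriorPeak (permVal n σ) i}.Finite :=
    coe_interiorPeakSet σ ▸ (interiorPeakSet σ).finite_toSet
  rw [← card_interiorPeakSet, ← Set.ncard_coe_finset, coe_interiorPeakSet, permVal_insertMax,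
    ncard_setOf_isInteriorPeak_insertAt (permVal_lt σ) (by omega) hfin, Nat.add_sub_cancel,
    ← coe_interiorPeakSet, ← Finset.coe_pair, ← Finset.coe_sdiff, Set.ncard_coe_finset]
  simp only [permVal_pos_iff]
  congr 1
  split_ifs <;> omega

theorem interiorPeaks_insertMax (j : Fin (n + 1)) :
    interiorPeaks (n + 1) (insertMax j σ) =
      if (j : ℕ) + 1 ∈ peakPreservingPositions σ then interiorPeaks n σ
      else interiorPeaks n σ + 1 := by
  rw [interiorPeaks_insertMax_eq_card_sdiff, Finset.sdiff_insert, Finset.sdiff_singleton_eq_erase,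
    ← card_interiorPeakSet]
  simp only [Finset.card_erase_eq_ite, Finset.mem_erase, peakPreservingPositions,
    Finset.mem_union, Finset.mem_insert, Finset.mem_singleton, Finset.mem_map,
    addRightEmbedding_apply, add_left_inj, exists_eq_right]
  have hj := j.isLt
  by_cases h : (j : ℕ) ∈ interiorPeakSet σ
  · have := interiorPeakSet_bounds h
    have := Finset.card_pos.mpr ⟨_, h⟩
    simp only [h, add_one_notMem_interiorPeakSet h, if_true, if_false, and_true, or_true,
      or_false]
    split_ifs <;> omega
  by_cases h' : (j : ℕ) + 1 ∈ interiorPeakSet σ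
  · have := interiorPeakSet_bounds h'
    have := Finset.card_pos.mpr ⟨_, h'⟩
    simp only [h, h', if_true, if_false, and_false, or_true, or_false]
    split_ifs <;> omega
  · simp only [h, h', if_false, and_false, or_false]
    split_ifs <;> omega

theorem sum_insertMax {M : Type*} [AddCommMonoid M] (hn : 1 ≤ n) (g : ℕ → M) :
    ∑ j : Fin (n + 1), g (interiorPeaks (n + 1) (insertMax j σ)) =
      (2 * interiorPeaks n σ + 2) • g (interiorPeaks n σ) +
        (n - 1 - 2 * interiorPeaks n σ) • g (interiorPeaks n σ + 1) := by
  set P := peakPreservingPositions σ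
  simp only [interiorPeaks_insertMax, apply_ite g]
  rw [Fin.sum_univ_eq_sum_range (fun i => if i + 1 ∈ P then _ else _), Finset.range_eq_Ico,
    Finset.sum_Ico_add' (fun i => if i ∈ P then _ else _), zero_add,
    Finset.Ico_add_one_right_eq_Icc, Finset.sum_ite, Finset.sum_const, Finset.sum_const,
    Finset.filter_mem_eq_inter, Finset.filter_notMem_eq_sdiff,
    Finset.inter_eq_right.mpr (peakPreservingPositions_subset σ),
    Finset.card_sdiff_of_subset (peakPreservingPositions_subset σ),
    card_peakPreservingPositions σ hn, Nat.card_Icc]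
  congr 2
  omega

theorem two_mul_interiorPeaks_lt (hn : 1 ≤ n) : 2 * interiorPeaks n σ < n := by
  have := Finset.card_le_card (peakPreservingPositions_subset σ)
  rw [card_peakPreservingPositions σ hn, Nat.card_Icc] at this
  omega

end interiorPeakSet

theorem odd_mul_bivariateCatalan_succ_right (k l : ℕ) :
    (2 * k + 1) * bivariateCatalan k (l + 1) = (2 * l + 1) * bivariateCatalan (k + 1) l := by
  simp only [bivariateCatalan, show 2 * (l + 1) = 2 * l + 1 + 1 by ring,
    show 2 * (k + 1) = 2 * k + 1 + 1 by ring, show k + (l + 1) = k + l + 1 by ring,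
    show k + 1 + l = k + l + 1 by ring, Nat.factorial_succ]
  push_cast
  field_simp
  ring

theorem even_mul_bivariateCatalan_succ_right (k l : ℕ) :
    (2 * k + 2) * bivariateCatalan k (l + 1) =
      4 * bivariateCatalan k l + 2 * l * bivariateCatalan (k + 1) l := by
  simp only [bivariateCatalan, show 2 * (l + 1) = 2 * l + 1 + 1 by ring,
    show 2 * (k + 1) = 2 * k + 1 + 1 by ring, show k + (l + 1) = k + l + 1 by ring,
    show k + 1 + l = k + l + 1 by ring, Nat.factorial_succ]
  push_cast
  field_simp
  ring

def peakWeight (n k : ℕ) : ℚ :=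
  (-1) ^ k * bivariateCatalan k (n / 2 - k)

theorem peakWeight_recurrence {n k : ℕ} (hk : 2 * k < n) :
    (2 * k + 2) • peakWeight (n + 1) k + (n - 1 - 2 * k) • peakWeight (n + 1) (k + 1) =
      4 ^ ((n + 1) / 2 - n / 2) * peakWeight n k := by
  simp only [peakWeight, nsmul_eq_mul, pow_succ]
  obtain ⟨a, rfl | rfl⟩ := Nat.even_or_odd' n
  · obtain ⟨l, rfl⟩ : ∃ l, a = k + l + 1 := ⟨a - k - 1, by omega⟩
    rw [show (2 * (k + l + 1) + 1) / 2 = k + l + 1 by omega,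
      show 2 * (k + l + 1) / 2 = k + l + 1 by omega,
      show k + l + 1 - k = l + 1 by omega, show k + l + 1 - (k + 1) = l by omega,
      show 2 * (k + l + 1) - 1 - 2 * k = 2 * l + 1 by omega, Nat.sub_self, pow_zero]
    push_cast
    linear_combination (-1 : ℚ) ^ k * odd_mul_bivariateCatalan_succ_right k l
  · obtain ⟨l, rfl⟩ : ∃ l, a = k + l := ⟨a - k, by omega⟩
    rw [show (2 * (k + l) + 1 + 1) / 2 = k + l + 1 by omega,
      show (2 * (k + l) + 1) / 2 = k + l by omega,
      show k + l + 1 - k = l + 1 by omega, show k + l + 1 - (k + 1) = l by omega,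
      show k + l + 1 - (k + l) = 1 by omega, show k + l - k = l by omega,
      show 2 * (k + l) + 1 - 1 - 2 * k = 2 * l by omega, pow_one]
    push_cast
    linear_combination (-1 : ℚ) ^ k * even_mul_bivariateCatalan_succ_right k l

theorem sum_peakWeight_interiorPeaks (n : ℕ) :
    ∑ σ : Equiv.Perm (Fin n), peakWeight n (interiorPeaks n σ) = 4 ^ (n / 2) := by
  induction n with
  | zero => simp [interiorPeaks, peakWeight, bivariateCatalan]
  | succ n ih =>
    rcases Nat.eq_zero_or_pos n with rfl | hn
    · simp [interiorPeaks, peakWeight, bivariateCatalan]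
    calc ∑ σ, peakWeight (n + 1) (interiorPeaks (n + 1) σ)
        = ∑ τ : Equiv.Perm (Fin n), ∑ j : Fin (n + 1),
            peakWeight (n + 1) (interiorPeaks (n + 1) (insertMax j τ)) :=
          sum_perm_eq_sum_insertMax _
      _ = ∑ τ, 4 ^ ((n + 1) / 2 - n / 2) * peakWeight n (interiorPeaks n τ) :=
          Finset.sum_congr rfl fun τ _ => by
            rw [sum_insertMax τ hn, peakWeight_recurrence (two_mul_interiorPeaks_lt τ hn)]
      _ = 4 ^ ((n + 1) / 2) := by
          rw [← Finset.mul_sum, ih, ← pow_add]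
          congr 1
          omega

theorem interior_peaks_bivariate_catalan_sum (n : ℕ) :
    ∑ σ : Equiv.Perm (Fin n),
      (-1 : ℚ) ^ interiorPeaks n σ
        * bivariateCatalan (interiorPeaks n σ) (n / 2 - interiorPeaks n σ)
    = 4 ^ (n / 2) :=
  sum_peakWeight_interiorPeaks n
end

section
/- For any even positive integer n, \sum over all permutations \sigma of {1, ..., n} of (-1)^{p_+(\sigma)} * C(p_+(\sigma), n/2 - p_+(\sigma)) = 0. -/
lemma bc_rec (j r : ℕ) :
    (2 * j + 1 : ℚ) * bivariateCatalan j (r + 1)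
      = (2 * r + 1) * bivariateCatalan (j + 1) r := by
  unfold bivariateCatalan
  have h1 : 2 * (r + 1) = (2 * r + 1) + 1 := by ring
  have h2 : 2 * (j + 1) = (2 * j + 1) + 1 := by ring
  have h3 : j + (r + 1) = (j + r) + 1 := by ring
  have h4 : (j + 1) + r = (j + r) + 1 := by ring
  rw [h1, h2, h3, h4]
  simp only [Nat.factorial_succ]
  push_cast
  have hj : (j.factorial : ℚ) ≠ 0 := Nat.cast_ne_zero.mpr j.factorial_ne_zero
  have hr : (r.factorial : ℚ) ≠ 0 := Nat.cast_ne_zero.mpr r.factorial_ne_zero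
  have hjr : ((j + r).factorial : ℚ) ≠ 0 := Nat.cast_ne_zero.mpr (j + r).factorial_ne_zero
  have h2j : ((2 * j).factorial : ℚ) ≠ 0 := Nat.cast_ne_zero.mpr (2 * j).factorial_ne_zero
  have h2r : ((2 * r).factorial : ℚ) ≠ 0 := Nat.cast_ne_zero.mpr (2 * r).factorial_ne_zero
  field_simp
  ring

def pkSet (k : ℕ) (f : ℕ → ℕ) : Finset ℕ :=
  (Finset.Icc 1 (k - 1)).filter (fun i => f (i - 1) < f i ∧ f (i + 1) < f i)

lemma mem_pkSet {k : ℕ} {f : ℕ → ℕ} {i : ℕ} :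
    i ∈ pkSet k f ↔ (1 ≤ i ∧ i ≤ k - 1) ∧ f (i - 1) < f i ∧ f (i + 1) < f i := by
  simp [pkSet, Finset.mem_filter, Finset.mem_Icc, and_assoc]

lemma pkSet_nonadj {k : ℕ} {f : ℕ → ℕ} {a : ℕ} (ha : a ∈ pkSet k f) :
    a + 1 ∉ pkSet k f := by
  intro hb
  rw [mem_pkSet] at ha hb
  have h1 : f (a + 1) < f a := ha.2.2
  have h2 : f (a + 1 - 1) < f (a + 1) := hb.2.1
  simp only [Nat.add_sub_cancel] at h2
  omega

lemma two_mul_card_pkSet_le {k : ℕ} {f : ℕ → ℕ} : 2 * (pkSet k f).card ≤ k := by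
  rcases Nat.eq_zero_or_pos k with hk | hk
  · subst hk
    have : pkSet 0 f ⊆ Finset.Icc 1 0 := Finset.filter_subset _ _
    simp_all [Finset.Icc_eq_empty_of_lt, Finset.subset_empty]
  have hsub : pkSet k f ∪ (pkSet k f).image (· + 1) ⊆ Finset.Icc 1 k := by
    intro x hx
    rcases Finset.mem_union.mp hx with hx | hx
    · rw [mem_pkSet] at hx; rw [Finset.mem_Icc]; omega
    · obtain ⟨a, ha, rfl⟩ := Finset.mem_image.mp hx
      rw [mem_pkSet] at ha; rw [Finset.mem_Icc]; omega
  have hdisj : Disjoint (pkSet k f) ((pkSet k f).image (· + 1)) := by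
    rw [Finset.disjoint_right]
    intro x hx hx'
    obtain ⟨a, ha, rfl⟩ := Finset.mem_image.mp hx
    exact pkSet_nonadj ha hx'
  have := Finset.card_le_card hsub
  rw [Finset.card_union_of_disjoint hdisj,
    Finset.card_image_of_injective _ (add_left_injective 1), Nat.card_Icc] at this
  omega

lemma augmentedPeaks_eq_card (n : ℕ) (σ : Equiv.Perm (Fin n)) :
    augmentedPeaks n σ = (pkSet n (permVal n σ)).card := rfl

/-- Inserting a new maximum at (1-based) position `P` into a word `f` of length `k`. -/
lemma card_pk_insert {k P : ℕ} {f g : ℕ → ℕ} (hP1 : 1 ≤ P) (hP2 : P ≤ k + 1)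
    (hfb : ∀ i, f i ≤ k)
    (hfg : ∀ i, g i = if i = P then k + 1 else if i < P then f i else f (i - 1)) :
    (pkSet (k + 1) g).card
      = ((pkSet k f) \ {P - 1, P}).card + (if P ≤ k then 1 else 0) := by
  have hgP : g P = k + 1 := by rw [hfg]; simp
  have hg_lt : ∀ i, i < P → g i = f i := by
    intro i hi; rw [hfg]; rw [if_neg (by omega), if_pos hi]
  have hg_gt : ∀ i, P < i → g i = f (i - 1) := by
    intro i hi; rw [hfg]; rw [if_neg (by omega), if_neg (by omega)]
  have hg_ne : ∀ i, i ≠ P → g i ≤ k := by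
    intro i hi
    rcases Nat.lt_or_ge i P with h | h
    · rw [hg_lt i h]; exact hfb i
    · rw [hg_gt i (by omega)]; exact hfb _
  -- the bijection between old peaks (away from P-1, P) and new peaks (away from P)
  have hcard : ((pkSet k f) \ {P - 1, P}).card = ((pkSet (k + 1) g) \ {P}).card := by
    apply Finset.card_bij (fun i _ => if i < P then i else i + 1)
    · -- maps into
      intro i hi
      rw [Finset.mem_sdiff, mem_pkSet] at hi
      obtain ⟨⟨⟨hi1, hik⟩, hp1, hp2⟩, hne⟩ := hi
      simp only [Finset.mem_insert, Finset.mem_singleton] at hne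
      push_neg at hne
      rw [Finset.mem_sdiff, mem_pkSet, Finset.mem_singleton]
      rcases Nat.lt_or_ge i P with h | h
      · have hi1P : i + 1 < P := by omega
        rw [if_pos h]
        refine ⟨⟨⟨hi1, by omega⟩, ?_, ?_⟩, by omega⟩
        · rw [hg_lt _ (by omega), hg_lt _ h]; exact hp1
        · rw [hg_lt _ hi1P, hg_lt _ h]; exact hp2
      · have hgi : P < i := by omega
        rw [if_neg (by omega)]
        refine ⟨⟨⟨by omega, by omega⟩, ?_, ?_⟩, by omega⟩
        · rw [show i + 1 - 1 = i from rfl, hg_gt _ hgi, hg_gt _ (by omega)]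
          simpa using hp1
        · rw [hg_gt _ (by omega), hg_gt _ (by omega)]
          simpa using hp2
    · -- injective
      intro a ha b hb hab
      rw [Finset.mem_sdiff, mem_pkSet] at ha hb
      split_ifs at hab <;> omega
    · -- surjective
      intro j hj
      rw [Finset.mem_sdiff, mem_pkSet, Finset.mem_singleton] at hj
      obtain ⟨⟨⟨hj1, hjk⟩, hq1, hq2⟩, hjP⟩ := hj
      rcases Nat.lt_or_ge j P with h | h
      · -- j < P, show j ≠ P - 1 and use i = j
        have hjP1 : j + 1 < P := by
          rcases Nat.lt_or_ge (j + 1) P with h' | h'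
          · exact h'
          · exfalso
            have : j + 1 = P := by omega
            rw [this, hgP] at hq2
            have := hg_ne j (by omega)
            omega
        refine ⟨j, ?_, by rw [if_pos h]⟩
        rw [Finset.mem_sdiff, mem_pkSet]
        simp only [Finset.mem_insert, Finset.mem_singleton]
        refine ⟨⟨⟨hj1, by omega⟩, ?_, ?_⟩, by push_neg; omega⟩
        · rw [← hg_lt _ (by omega), ← hg_lt _ h]; exact hq1
        · rw [← hg_lt _ hjP1, ← hg_lt _ h]; exact hq2
      · -- j > P (since j ≠ P); show j ≥ P + 2 and use i = j - 1
        have hjP2 : P + 2 ≤ j := by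
          rcases Nat.lt_or_ge (P + 1) j with h' | h'
          · omega
          · exfalso
            have : j = P + 1 := by omega
            have hq1' := hq1
            rw [this] at hq1'
            simp only [Nat.add_sub_cancel] at hq1'
            rw [hgP] at hq1'
            have := hg_ne (P + 1) (by omega)
            omega
        refine ⟨j - 1, ?_, by rw [if_neg (by omega)]; omega⟩
        rw [Finset.mem_sdiff, mem_pkSet]
        simp only [Finset.mem_insert, Finset.mem_singleton]
        refine ⟨⟨⟨by omega, by omega⟩, ?_, ?_⟩, by push_neg; omega⟩
        · have e1 : g (j - 1) = f (j - 1 - 1) := hg_gt _ (by omega)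
          have e2 : g j = f (j - 1) := hg_gt _ (by omega)
          rw [← e1, ← e2]; exact hq1
        · have e2 : g j = f (j - 1) := hg_gt _ (by omega)
          have e3 : g (j + 1) = f j := by rw [hg_gt _ (by omega)]; simp
          rw [show j - 1 + 1 = j from by omega, ← e3, ← e2]; exact hq2
  rw [hcard]
  by_cases hPk : P ≤ k
  · rw [if_pos hPk]
    have hPmem : P ∈ pkSet (k + 1) g := by
      rw [mem_pkSet]
      refine ⟨⟨hP1, by omega⟩, ?_, ?_⟩
      · rw [hgP]; have := hg_ne (P - 1) (by omega); omega
      · rw [hgP]; have := hg_ne (P + 1) (by omega); omega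
    rw [Finset.sdiff_singleton_eq_erase, Finset.card_erase_of_mem hPmem]
    have : 1 ≤ (pkSet (k + 1) g).card := Finset.card_pos.mpr ⟨P, hPmem⟩
    omega
  · rw [if_neg hPk]
    have hPnot : P ∉ pkSet (k + 1) g := by
      rw [mem_pkSet]; push_neg; intro h; omega
    rw [Finset.sdiff_singleton_eq_erase, Finset.erase_eq_of_notMem hPnot]
    omega

lemma permVal_le (n : ℕ) (σ : Equiv.Perm (Fin n)) (i : ℕ) : permVal n σ i ≤ n := by
  unfold permVal
  split
  · exact (σ _).isLt
  · omega

/-- Insert the new maximum at (0-based) position `p` into `τ`. -/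
noncomputable def insMax (k : ℕ) (τ : Equiv.Perm (Fin k)) (p : Fin (k + 1)) :
    Equiv.Perm (Fin (k + 1)) :=
  Equiv.ofBijective
    (fun j => if h : (j : ℕ) = (p : ℕ) then Fin.last k
      else if hlt : (j : ℕ) < (p : ℕ) then
        Fin.castSucc (τ ⟨j, by omega⟩)
      else Fin.castSucc (τ ⟨(j : ℕ) - 1, by omega⟩))
    (by
      rw [Fintype.bijective_iff_injective_and_card]
      refine ⟨?_, rfl⟩
      intro a b hab
      have hne : ∀ x : Fin k, Fin.castSucc x ≠ Fin.last k :=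
        fun x => (Fin.castSucc_lt_last x).ne
      simp only at hab
      split_ifs at hab with h1 h2 h3 h4 h5 h6 h7
      · exact Fin.ext (by omega)
      · exact absurd hab.symm (hne _)
      · exact absurd hab.symm (hne _)
      · exact absurd hab (hne _)
      · have := τ.injective (Fin.castSucc_injective k hab)
        simp only [Fin.mk.injEq] at this
        exact Fin.ext (by omega)
      · have := τ.injective (Fin.castSucc_injective k hab)
        simp only [Fin.mk.injEq] at this
        exact Fin.ext (by omega)
      · exact absurd hab (hne _)
      · have := τ.injective (Fin.castSucc_injective k hab)
        simp only [Fin.mk.injEq] at this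
        exact Fin.ext (by omega)
      · have := τ.injective (Fin.castSucc_injective k hab)
        simp only [Fin.mk.injEq] at this
        exact Fin.ext (by omega))

lemma permVal_insMax (k : ℕ) (τ : Equiv.Perm (Fin k)) (p : Fin (k + 1)) (i : ℕ) :
    permVal (k + 1) (insMax k τ p) i
      = if i = (p : ℕ) + 1 then k + 1
        else if i < (p : ℕ) + 1 then permVal k τ i else permVal k τ (i - 1) := by
  have hp := p.isLt
  unfold permVal insMax
  simp only [Equiv.ofBijective_apply]
  by_cases h1 : 1 ≤ i ∧ i ≤ k + 1
  · rw [dif_pos h1]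
    by_cases h2 : i = (p : ℕ) + 1
    · rw [if_pos h2]
      rw [dif_pos (show i - 1 = (p : ℕ) by omega)]
      simp
    · rw [if_neg h2, dif_neg (show ¬ i - 1 = (p : ℕ) by omega)]
      by_cases h3 : i < (p : ℕ) + 1
      · rw [if_pos h3, dif_pos (show i - 1 < (p : ℕ) by omega)]
        rw [dif_pos (show 1 ≤ i ∧ i ≤ k by omega)]
        simp
      · rw [if_neg h3, dif_neg (show ¬ i - 1 < (p : ℕ) by omega)]
        rw [dif_pos (show 1 ≤ i - 1 ∧ i - 1 ≤ k by omega)]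
        simp only [Fin.coe_castSucc]
  · rw [dif_neg h1]
    push_neg at h1
    rcases Nat.eq_zero_or_pos i with rfl | hi0
    · rw [if_neg (by omega), if_pos (by omega), dif_neg (by omega)]
    · have hbig : k + 1 < i := h1 hi0
      rw [if_neg (by omega), if_neg (by omega), dif_neg (by omega)]

lemma permVal_fin (n : ℕ) (σ : Equiv.Perm (Fin n)) (i : Fin n) :
    permVal n σ ((i : ℕ) + 1) = (σ i : ℕ) + 1 := by
  have hi := i.isLt
  unfold permVal
  rw [dif_pos (by omega)]
  simp

lemma insMax_bijective (k : ℕ) :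
    Function.Bijective (fun q : Equiv.Perm (Fin k) × Fin (k + 1) => insMax k q.1 q.2) := by
  rw [Fintype.bijective_iff_injective_and_card]
  constructor
  · rintro ⟨τ, p⟩ ⟨τ', p'⟩ h
    simp only at h
    have hv : ∀ i, permVal (k + 1) (insMax k τ p) i = permVal (k + 1) (insMax k τ' p') i := by
      intro i; rw [h]
    have hpp : p = p' := by
      by_contra hne
      have hne' : ¬((p : ℕ) + 1 = (p' : ℕ) + 1) := by
        simp only [Fin.ext_iff] at hne; omega
      have h1 := hv ((p : ℕ) + 1)
      rw [permVal_insMax, permVal_insMax, if_pos rfl, if_neg hne'] at h1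
      have h2 := permVal_le k τ' ((p : ℕ) + 1)
      have h3 := permVal_le k τ' ((p : ℕ) + 1 - 1)
      split_ifs at h1 <;> omega
    subst hpp
    have hττ : τ = τ' := by
      apply Equiv.ext
      intro i
      have hi := i.isLt
      have hpk := p.isLt
      by_cases hip : (i : ℕ) < (p : ℕ)
      · have hc1 : ¬((i : ℕ) + 1 = (p : ℕ) + 1) := by omega
        have hc2 : ((i : ℕ) + 1 < (p : ℕ) + 1) := by omega
        have h1 := hv ((i : ℕ) + 1)
        rw [permVal_insMax, permVal_insMax, if_neg hc1, if_neg hc1,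
          if_pos hc2, if_pos hc2] at h1
        rw [permVal_fin, permVal_fin] at h1
        exact Fin.ext (by omega)
      · have hc1 : ¬((i : ℕ) + 2 = (p : ℕ) + 1) := by omega
        have hc2 : ¬((i : ℕ) + 2 < (p : ℕ) + 1) := by omega
        have h1 := hv ((i : ℕ) + 2)
        rw [permVal_insMax, permVal_insMax, if_neg hc1, if_neg hc1,
          if_neg hc2, if_neg hc2] at h1
        rw [show (i : ℕ) + 2 - 1 = (i : ℕ) + 1 from by omega, permVal_fin, permVal_fin] at h1
        exact Fin.ext (by omega)
    rw [hττ]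
  · simp [Fintype.card_perm, Nat.factorial_succ, mul_comm]

/-- The count of positions whose 1-based insertion index is `k+1` or adjacent to a peak. -/
lemma card_filter_Q {k : ℕ} (hk : 1 ≤ k) (f : ℕ → ℕ) :
    (Finset.univ.filter (fun p : Fin (k + 1) =>
        (p : ℕ) + 1 = k + 1 ∨ (p : ℕ) ∈ pkSet k f ∨ (p : ℕ) + 1 ∈ pkSet k f)).card
      = 2 * (pkSet k f).card + 1 := by
  set pf := pkSet k f with hpf
  have hmem : ∀ {x}, x ∈ pf → 1 ≤ x ∧ x ≤ k - 1 := fun hx => (mem_pkSet.mp hx).1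
  have hcard : (Finset.univ.filter (fun p : Fin (k + 1) =>
      (p : ℕ) + 1 = k + 1 ∨ (p : ℕ) ∈ pf ∨ (p : ℕ) + 1 ∈ pf)).card
      = (insert k (pf ∪ pf.image (· - 1))).card := by
    apply Finset.card_bij (fun (p : Fin (k + 1)) _ => (p : ℕ))
    · intro p hp
      rw [Finset.mem_filter] at hp
      rcases hp.2 with h | h | h
      · simp only [Finset.mem_insert]; left; omega
      · simp only [Finset.mem_insert, Finset.mem_union]; right; left; exact h
      · simp only [Finset.mem_insert, Finset.mem_union, Finset.mem_image]
        right; right; exact ⟨(p : ℕ) + 1, h, by omega⟩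
    · intro a _ b _ hab; exact Fin.ext hab
    · intro x hx
      simp only [Finset.mem_insert, Finset.mem_union, Finset.mem_image] at hx
      have hxk : x ≤ k := by
        rcases hx with rfl | hx | ⟨e, he, rfl⟩
        · omega
        · have := hmem hx; omega
        · have := hmem he; omega
      refine ⟨⟨x, by omega⟩, ?_, rfl⟩
      rw [Finset.mem_filter]
      refine ⟨Finset.mem_univ _, ?_⟩
      rcases hx with rfl | hx | ⟨e, he, rfl⟩
      · left; rfl
      · right; left; exact hx
      · right; right
        have := hmem he
        rw [show e - 1 + 1 = e from by omega]
        exact he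
  rw [hcard]
  have hknot : k ∉ pf ∪ pf.image (· - 1) := by
    simp only [Finset.mem_union, Finset.mem_image]
    push_neg
    constructor
    · intro h; have := hmem h; omega
    · intro e he; have := hmem he; omega
  rw [Finset.card_insert_of_notMem hknot]
  have hdisj : Disjoint pf (pf.image (· - 1)) := by
    rw [Finset.disjoint_right]
    intro x hx hx'
    obtain ⟨e, he, rfl⟩ := Finset.mem_image.mp hx
    have h1 := hmem he
    have : e - 1 + 1 = e := by omega
    exact pkSet_nonadj hx' (this ▸ he)
  rw [Finset.card_union_of_disjoint hdisj]
  have himg : (pf.image (· - 1)).card = pf.card := by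
    apply Finset.card_image_of_injOn
    intro a ha b hb hab
    have h1 := hmem ha; have h2 := hmem hb
    simp only at hab; omega
  omega

lemma innerSumIns (m k : ℕ) (hk : k + 1 = 2 * m) (τ : Equiv.Perm (Fin k)) :
    ∑ p : Fin (k + 1),
      (-1 : ℚ) ^ augmentedPeaks (k + 1) (insMax k τ p)
        * bivariateCatalan (augmentedPeaks (k + 1) (insMax k τ p))
            ((k + 1) / 2 - augmentedPeaks (k + 1) (insMax k τ p)) = 0 := by
  have hk1 : 1 ≤ k := by omega
  set f := permVal k τ with hf
  set pf := pkSet k f with hpf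
  set j := pf.card with hj
  have hmem : ∀ {x}, x ∈ pf → 1 ≤ x ∧ x ≤ k - 1 := fun hx => (mem_pkSet.mp hx).1
  have hj2 : 2 * j ≤ k := two_mul_card_pkSet_le
  have hjm : j + 1 ≤ m := by omega
  have hdiv : (k + 1) / 2 = m := by omega
  -- compute the number of augmented peaks after each insertion
  have hapk : ∀ p : Fin (k + 1),
      augmentedPeaks (k + 1) (insMax k τ p)
        = if ((p : ℕ) + 1 = k + 1 ∨ (p : ℕ) ∈ pf ∨ (p : ℕ) + 1 ∈ pf) then j else j + 1 := by
    intro p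
    have hp := p.isLt
    have h := card_pk_insert (k := k) (P := (p : ℕ) + 1) (f := f)
      (g := permVal (k + 1) (insMax k τ p)) (by omega) (by omega)
      (permVal_le k τ) (permVal_insMax k τ p)
    rw [augmentedPeaks_eq_card, h]
    rw [show (p : ℕ) + 1 - 1 = (p : ℕ) from rfl]
    by_cases hQ : ((p : ℕ) + 1 = k + 1 ∨ (p : ℕ) ∈ pf ∨ (p : ℕ) + 1 ∈ pf)
    · rw [if_pos hQ]
      rcases hQ with hQ | hQ | hQ
      · -- p = k : insertion at the end
        have hsd : pf \ {(p : ℕ), (p : ℕ) + 1} = pf := by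
          ext x
          simp only [Finset.mem_sdiff, Finset.mem_insert, Finset.mem_singleton, not_or]
          constructor
          · tauto
          · intro hx
            have := hmem hx
            exact ⟨hx, by omega, by omega⟩
        rw [if_neg (by omega), hsd]
        omega
      · -- p itself is a peak of τ
        have hnp : (p : ℕ) + 1 ∉ pf := pkSet_nonadj hQ
        have hsd : pf \ {(p : ℕ), (p : ℕ) + 1} = pf.erase (p : ℕ) := by
          ext x
          simp only [Finset.mem_sdiff, Finset.mem_insert, Finset.mem_singleton, not_or,
            Finset.mem_erase]
          constructor
          · tauto
          · rintro ⟨hne, hx⟩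
            exact ⟨hx, hne, fun hc => hnp (hc ▸ hx)⟩
        have hple : (p : ℕ) + 1 ≤ k := by have := hmem hQ; omega
        have hjpos : 1 ≤ j := by
          rw [hj]
          exact Finset.card_pos.mpr ⟨_, hQ⟩
        rw [if_pos hple, hsd, Finset.card_erase_of_mem hQ]
        omega
      · -- p + 1 is a peak of τ
        have hnp : (p : ℕ) ∉ pf := fun hc => pkSet_nonadj hc hQ
        have hsd : pf \ {(p : ℕ), (p : ℕ) + 1} = pf.erase ((p : ℕ) + 1) := by
          ext x
          simp only [Finset.mem_sdiff, Finset.mem_insert, Finset.mem_singleton, not_or,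
            Finset.mem_erase]
          constructor
          · tauto
          · rintro ⟨hne, hx⟩
            exact ⟨hx, fun hc => hnp (hc ▸ hx), hne⟩
        have hple : (p : ℕ) + 1 ≤ k := by have := hmem hQ; omega
        have hjpos : 1 ≤ j := by
          rw [hj]
          exact Finset.card_pos.mpr ⟨_, hQ⟩
        rw [if_pos hple, hsd, Finset.card_erase_of_mem hQ]
        omega
    · push_neg at hQ
      obtain ⟨hQ1, hQ2, hQ3⟩ := hQ
      rw [if_neg (show ¬((p : ℕ) + 1 = k + 1 ∨ (p : ℕ) ∈ pf ∨ (p : ℕ) + 1 ∈ pf) from by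
        push_neg; exact ⟨hQ1, hQ2, hQ3⟩)]
      have hsd : pf \ {(p : ℕ), (p : ℕ) + 1} = pf := by
        ext x
        simp only [Finset.mem_sdiff, Finset.mem_insert, Finset.mem_singleton, not_or]
        constructor
        · tauto
        · intro hx
          exact ⟨hx, fun hc => hQ2 (hc ▸ hx), fun hc => hQ3 (hc ▸ hx)⟩
      rw [if_pos (show (p : ℕ) + 1 ≤ k by omega), hsd]
  -- rewrite the sum as an if-then-else sum
  have hrw : ∀ p : Fin (k + 1),
      (-1 : ℚ) ^ augmentedPeaks (k + 1) (insMax k τ p)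
        * bivariateCatalan (augmentedPeaks (k + 1) (insMax k τ p))
            ((k + 1) / 2 - augmentedPeaks (k + 1) (insMax k τ p))
      = if ((p : ℕ) + 1 = k + 1 ∨ (p : ℕ) ∈ pf ∨ (p : ℕ) + 1 ∈ pf)
          then (-1 : ℚ) ^ j * bivariateCatalan j (m - j)
          else (-1 : ℚ) ^ (j + 1) * bivariateCatalan (j + 1) (m - (j + 1)) := by
    intro p
    rw [hapk p, hdiv]
    by_cases hQ : ((p : ℕ) + 1 = k + 1 ∨ (p : ℕ) ∈ pf ∨ (p : ℕ) + 1 ∈ pf)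
    · rw [if_pos hQ]; rw [if_pos hQ]
    · rw [if_neg hQ]; rw [if_neg hQ]
  rw [Finset.sum_congr rfl (fun p _ => hrw p)]
  rw [Finset.sum_ite, Finset.sum_const, Finset.sum_const]
  have hQcard := card_filter_Q hk1 f
  rw [Finset.filter_not, Finset.card_sdiff_of_subset (Finset.filter_subset _ _), hQcard,
    Finset.card_univ, Fintype.card_fin]
  -- final algebra
  obtain ⟨r, hr⟩ : ∃ r, m = j + r + 1 := ⟨m - j - 1, by omega⟩
  have e1 : m - j = r + 1 := by omega
  have e2 : m - (j + 1) = r := by omega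
  have e3 : k + 1 - (2 * (pkSet k f).card + 1) = 2 * r + 1 := by
    rw [← hpf, ← hj]; omega
  have e4 : 2 * (pkSet k f).card + 1 = 2 * j + 1 := by rw [← hpf, ← hj]
  rw [e1, e2, e3, e4, nsmul_eq_mul, nsmul_eq_mul]
  push_cast
  linear_combination ((-1 : ℚ) ^ j) * bc_rec j r

theorem augmented_peaks_bivariate_catalan_sum (n : ℕ) (hn : 0 < n) (hne : n % 2 = 0) :
    ∑ σ : Equiv.Perm (Fin n),
      (-1 : ℚ) ^ augmentedPeaks n σ
        * bivariateCatalan (augmentedPeaks n σ) (n / 2 - augmentedPeaks n σ)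
    = 0 := by
  obtain ⟨k, rfl⟩ : ∃ k, n = k + 1 := ⟨n - 1, by omega⟩
  obtain ⟨m, hm⟩ : ∃ m, k + 1 = 2 * m := ⟨(k + 1) / 2, by omega⟩
  have hbij := Fintype.sum_bijective _ (insMax_bijective k)
    (fun q : Equiv.Perm (Fin k) × Fin (k + 1) =>
      (-1 : ℚ) ^ augmentedPeaks (k + 1) (insMax k q.1 q.2)
        * bivariateCatalan (augmentedPeaks (k + 1) (insMax k q.1 q.2))
            ((k + 1) / 2 - augmentedPeaks (k + 1) (insMax k q.1 q.2)))
    (fun σ : Equiv.Perm (Fin (k + 1)) =>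
      (-1 : ℚ) ^ augmentedPeaks (k + 1) σ
        * bivariateCatalan (augmentedPeaks (k + 1) σ)
            ((k + 1) / 2 - augmentedPeaks (k + 1) σ))
    (fun q => rfl)
  rw [← hbij, Fintype.sum_prod_type]
  rw [Finset.sum_congr rfl (fun τ _ => innerSumIns m k hm τ)]
  simp
end

section
/- For any positive integer m, \sum_{j=0}^{m-1} 2^{2m-2j-1} * Cat(j) = 4^m - binom(2m, m). -/
lemma catalan_power_sum_aux (m : ℕ) :
    (∑ j ∈ Finset.range m, 2 ^ (2 * m - 2 * j - 1) * catalan j) + (2 * m).choose m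
    = 4 ^ m := by
  induction m with
  | zero => simp
  | succ n ih =>
    rw [Finset.sum_range_succ]
    have h1 : ∀ j ∈ Finset.range n,
        2 ^ (2 * (n + 1) - 2 * j - 1) * catalan j
        = 4 * (2 ^ (2 * n - 2 * j - 1) * catalan j) := by
      intro j hj
      have hj' : j < n := Finset.mem_range.mp hj
      have he : 2 * (n + 1) - 2 * j - 1 = (2 * n - 2 * j - 1) + 2 := by omega
      rw [he, pow_add]; ring
    rw [Finset.sum_congr rfl h1, ← Finset.mul_sum]
    have hc : 2 * (n + 1) - 2 * n - 1 = 1 := by omega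
    rw [hc]
    have key : 2 * catalan n + (2 * (n + 1)).choose (n + 1) = 4 * (2 * n).choose n := by
      have h2 := succ_mul_catalan_eq_centralBinom n
      have h3 := Nat.succ_mul_centralBinom_succ n
      have e : (n + 1) * (2 * catalan n + (2 * (n + 1)).choose (n + 1))
          = (n + 1) * (4 * (2 * n).choose n) := by
        show (n + 1) * (2 * catalan n + Nat.centralBinom (n + 1))
          = (n + 1) * (4 * Nat.centralBinom n)
        nlinarith [h2, h3]
      exact Nat.eq_of_mul_eq_mul_left (Nat.succ_pos n) e
    have : 4 ^ (n + 1) = 4 * 4 ^ n := by ring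
    omega

theorem catalan_power_sum (m : ℕ) (hm : 0 < m) :
    ∑ j ∈ Finset.range m, 2 ^ (2 * m - 2 * j - 1) * catalan j
    = 4 ^ m - (2 * m).choose m := by
  have := catalan_power_sum_aux m
  omega
end

section
/- For any non-negative integers a, b, c, as an identity of integers: C(b, a+c) = 4^c * C(b, a) - \sum_{j=1}^{c} 4^{c-j} * C(b+1, a+j-1). -/
lemma bc_step (b n : ℕ) :
    bivariateCatalan b (n + 1) = 4 * bivariateCatalan b n - bivariateCatalan (b + 1) n := by
  unfold bivariateCatalan
  have h1 : 2 * (n + 1) = 2 * n + 1 + 1 := by ring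
  have h2 : 2 * (b + 1) = 2 * b + 1 + 1 := by ring
  have h3 : b + (n + 1) = (b + n) + 1 := by ring
  have h4 : b + 1 + n = (b + n) + 1 := by ring
  rw [h1, h2, h3, h4]
  simp only [Nat.factorial_succ]
  have f1 : ((2 * n).factorial : ℚ) ≠ 0 := by positivity
  have f2 : ((2 * b).factorial : ℚ) ≠ 0 := by positivity
  have f3 : ((b + n).factorial : ℚ) ≠ 0 := by positivity
  have f4 : (n.factorial : ℚ) ≠ 0 := by positivity
  have f5 : (b.factorial : ℚ) ≠ 0 := by positivity
  have f6 : ((b:ℚ) + n + 1) ≠ 0 := by positivity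
  have f7 : ((n:ℚ) + 1) ≠ 0 := by positivity
  have f8 : ((b:ℚ) + 1) ≠ 0 := by positivity
  push_cast
  field_simp
  ring

theorem bivariate_catalan_recursion (a b c : ℕ) :
    bivariateCatalan b (a + c)
    = 4 ^ c * bivariateCatalan b a
        - ∑ j ∈ Finset.Icc 1 c, 4 ^ (c - j) * bivariateCatalan (b + 1) (a + j - 1) := by
  induction c with
  | zero => simp
  | succ c ih =>
    rw [Finset.sum_Icc_succ_top (by omega : 1 ≤ c + 1)]
    have : a + (c + 1) = (a + c) + 1 := by ring
    rw [this, bc_step, ih]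
    have hterm : a + c + 1 - 1 = a + c := by omega
    rw [hterm]
    have hsum : ∑ j ∈ Finset.Icc 1 c, (4:ℚ) ^ (c + 1 - j) * bivariateCatalan (b + 1) (a + j - 1)
        = 4 * ∑ j ∈ Finset.Icc 1 c, (4:ℚ) ^ (c - j) * bivariateCatalan (b + 1) (a + j - 1) := by
      rw [Finset.mul_sum]
      refine Finset.sum_congr rfl fun j hj => ?_
      simp only [Finset.mem_Icc] at hj
      have : c + 1 - j = (c - j) + 1 := by omega
      rw [this, pow_succ]
      ring
    rw [hsum]
    simp
    ring
end

section
/- For any non-negative integers b and c, as an identity of rational numbers: binom(2b, b) = C(b, c)/4^c + \sum_{j=1}^{c} C(b+1, j-1)/4^j. -/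
lemma biv_zero (b : ℕ) : bivariateCatalan b 0 = ((2 * b).choose b : ℚ) := by
  rw [bivariateCatalan, div_eq_iff (by positivity)]
  have key := Nat.choose_mul_factorial_mul_factorial (show b ≤ 2*b by omega)
  rw [show 2*b-b=b from by omega] at key
  rw [← key]
  push_cast
  simp [Nat.factorial_zero]
  ring

lemma biv_rec (b c : ℕ) :
    bivariateCatalan b (c + 1) + bivariateCatalan (b + 1) c = 4 * bivariateCatalan b c := by
  have h1 : 2 * (c + 1) = (2*c+1) + 1 := by ring
  have h2 : 2 * (b + 1) = (2*b+1) + 1 := by ring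
  have h3 : b + (c + 1) = (b + c) + 1 := by ring
  have h4 : (b + 1) + c = (b + c) + 1 := by ring
  rw [bivariateCatalan, bivariateCatalan, bivariateCatalan, h1, h2, h3, h4]
  simp only [Nat.factorial_succ]
  have f1 : (b.factorial : ℚ) ≠ 0 := by positivity
  have f2 : (c.factorial : ℚ) ≠ 0 := by positivity
  have f3 : ((b+c).factorial : ℚ) ≠ 0 := by positivity
  have f4 : ((2*b).factorial : ℚ) ≠ 0 := by positivity
  have f5 : ((2*c).factorial : ℚ) ≠ 0 := by positivity
  push_cast
  field_simp
  ring

theorem central_binom_from_bivariate_catalan (b c : ℕ) :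
    ((2 * b).choose b : ℚ)
    = bivariateCatalan b c / 4 ^ c
        + ∑ j ∈ Finset.Icc 1 c, bivariateCatalan (b + 1) (j - 1) / 4 ^ j := by
  induction c with
  | zero => simp [biv_zero]
  | succ c ih =>
    rw [ih, Finset.sum_Icc_succ_top (by omega)]
    simp only [Nat.add_sub_cancel]
    have h := biv_rec b c
    linear_combination -h / 4 ^ (c + 1)
end

section
/- For any non-negative integers b and c, as an identity of rational numbers: 2 * Cat(b) = C(b, c+1)/4^c + \sum_{j=1}^{c} C(b+1, j)/4^j. -/
theorem bivariateCatalan_comm (m n : ℕ) : bivariateCatalan m n = bivariateCatalan n m := by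
  unfold bivariateCatalan
  rw [add_comm m n]
  ring

theorem bivariateCatalan_zero_right (m : ℕ) : bivariateCatalan m 0 = m.centralBinom := by
  rw [bivariateCatalan, Nat.centralBinom_eq_two_mul_choose,
    Nat.cast_choose ℚ (by omega : m ≤ 2 * m),
    two_mul m, Nat.add_sub_cancel]
  simp

theorem bivariateCatalan_succ_right (m n : ℕ) :
    bivariateCatalan m (n + 1) = 2 * (2 * n + 1) / (m + n + 1) * bivariateCatalan m n := by
  have two_mul_succ : 2 * (n + 1) = 2 * n + 1 + 1 := by ring
  simp only [bivariateCatalan, two_mul_succ, ← add_assoc, Nat.factorial_succ]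
  push_cast
  field_simp
  ring

theorem bivariateCatalan_succ_left (m n : ℕ) :
    bivariateCatalan (m + 1) n = 2 * (2 * m + 1) / (m + n + 1) * bivariateCatalan m n := by
  rw [bivariateCatalan_comm, bivariateCatalan_succ_right, bivariateCatalan_comm, add_comm (n : ℚ)]

theorem bivariateCatalan_succ_right_add_succ_left (m n : ℕ) :
    bivariateCatalan m (n + 1) + bivariateCatalan (m + 1) n = 4 * bivariateCatalan m n := by
  rw [bivariateCatalan_succ_right, bivariateCatalan_succ_left]
  field_simp
  ring

theorem bivariateCatalan_one_right (m : ℕ) : bivariateCatalan m 1 = 2 * catalan m := by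
  rw [bivariateCatalan_succ_right, bivariateCatalan_zero_right,
    ← succ_mul_catalan_eq_centralBinom]
  push_cast
  field_simp
  ring

theorem catalan_from_bivariate_catalan (b c : ℕ) :
    2 * (catalan b : ℚ)
    = bivariateCatalan b (c + 1) / 4 ^ c
        + ∑ j ∈ Finset.Icc 1 c, bivariateCatalan (b + 1) j / 4 ^ j := by
  induction c with
  | zero => simp [bivariateCatalan_one_right]
  | succ c ih =>
    have hsplit : bivariateCatalan b (c + 1) / 4 ^ c
        = bivariateCatalan b (c + 1 + 1) / 4 ^ (c + 1)
          + bivariateCatalan (b + 1) (c + 1) / 4 ^ (c + 1) := by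
      rw [← add_div, bivariateCatalan_succ_right_add_succ_left, pow_succ]
      field_simp
    rw [Finset.sum_Icc_succ_top (by omega), ih, hsplit]
    ring
end
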